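/- arXiv:1003.4003 — 6 statements merged into one kernel-verified Lean document; each statement's English description precedes it below -/
import Mathlib

section
/- The number of graphs on n labeled vertices in which every vertex has even degree equals 2^{C(n-1,2)}. -/
open Finset SimpleGraph

private def graphEquivProp (V : Type*) :
    SimpleGraph V ≃ ({e : Sym2 V // ¬ e.IsDiag} → Prop) where
  toFun G e := e.1 ∈ G.edgeSet
  invFun f := SimpleGraph.fromEdgeSet {e | ∃ h : ¬ e.IsDiag, f ⟨e, h⟩}
  left_inv G := by
    ext v w
    simp only [fromEdgeSet_adj, Set.mem_setOf_eq, mem_edgeSet]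
    constructor
    · rintro ⟨⟨h, ha⟩, hne⟩; exact ha
    · intro h
      exact ⟨⟨by simp [Sym2.mk_isDiag_iff, G.ne_of_adj h], h⟩, G.ne_of_adj h⟩
  right_inv f := by
    funext e
    obtain ⟨e, he⟩ := e
    induction e using Sym2.ind with
    | _ v w =>
      have hvw : v ≠ w := by simpa [Sym2.mk_isDiag_iff] using he
      apply propext
      simp only [mem_edgeSet, fromEdgeSet_adj, Set.mem_setOf_eq]
      constructor
      · rintro ⟨⟨h, hf⟩, _⟩; exact hf
      · intro hf; exact ⟨⟨he, hf⟩, hvw⟩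

private lemma card_simpleGraph (n : ℕ) :
    Nat.card (SimpleGraph (Fin n)) = 2 ^ n.choose 2 := by
  rw [Nat.card_congr (graphEquivProp (Fin n)), Nat.card_eq_fintype_card,
    Fintype.card_fun, Fintype.card_prop, Sym2.card_subtype_not_diag, Fintype.card_fin]

private lemma natCard_adj {m : ℕ} (G : SimpleGraph (Fin m)) (v : Fin m)
    [DecidableRel G.Adj] :
    Nat.card {w : Fin m // G.Adj v w} = #({w | G.Adj v w} : Finset (Fin m)) := by
  rw [Nat.card_eq_fintype_card]
  exact Fintype.card_subtype _

private lemma natCard_adj_degree {m : ℕ} (G : SimpleGraph (Fin m)) (v : Fin m)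
    [DecidableRel G.Adj] :
    Nat.card {w : Fin m // G.Adj v w} = G.degree v := by
  rw [natCard_adj, degree, neighborFinset_eq_filter]

/-- Extend a graph on `Fin n` to `Fin (n+1)` by joining the new vertex `0` to all
odd-degree vertices. -/
private def extGraph {n : ℕ} (H : SimpleGraph (Fin n)) : SimpleGraph (Fin (n + 1)) :=
  SimpleGraph.fromRel (fun a b =>
    (∃ a' b' : Fin n, a = a'.succ ∧ b = b'.succ ∧ H.Adj a' b') ∨
    (a = 0 ∧ ∃ b' : Fin n, b = b'.succ ∧ Odd (Nat.card {w : Fin n // H.Adj b' w})))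

private lemma extGraph_adj_succ {n : ℕ} (H : SimpleGraph (Fin n)) (a b : Fin n) :
    (extGraph H).Adj a.succ b.succ ↔ H.Adj a b := by
  simp only [extGraph, fromRel_adj, Fin.succ_ne_zero, false_and, and_false, or_false,
    Fin.succ_inj, ne_eq]
  constructor
  · rintro ⟨hne, h | h⟩
    · obtain ⟨a', b', rfl, rfl, h⟩ := (by simpa [Fin.succ_inj] using h :
        ∃ a' b', a = a' ∧ b = b' ∧ H.Adj a' b')
      exact h
    · obtain ⟨a', b', rfl, rfl, h⟩ := (by simpa [Fin.succ_inj] using h :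
        ∃ a' b', b = a' ∧ a = b' ∧ H.Adj a' b')
      exact h.symm
  · intro h
    exact ⟨H.ne_of_adj h, Or.inl ⟨a, b, rfl, rfl, h⟩⟩

private lemma extGraph_adj_zero {n : ℕ} (H : SimpleGraph (Fin n)) (b : Fin n) :
    (extGraph H).Adj 0 b.succ ↔ Odd (Nat.card {w : Fin n // H.Adj b w}) := by
  simp only [extGraph, fromRel_adj, ne_eq]
  constructor
  · rintro ⟨hne, h | h⟩
    · rcases h with ⟨a', b', h0, _⟩ | ⟨_, b', hb, hodd⟩
      · exact absurd h0.symm (Fin.succ_ne_zero a')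
      · obtain rfl : b = b' := by simpa [Fin.succ_inj] using hb
        exact hodd
    · rcases h with ⟨a', b', _, h0, _⟩ | ⟨h0, _⟩
      · exact absurd h0.symm (Fin.succ_ne_zero b')
      · exact absurd h0 (Fin.succ_ne_zero b)
  · intro h
    exact ⟨(Fin.succ_ne_zero b).symm, Or.inl (Or.inr ⟨by trivial, b, rfl, h⟩)⟩

private lemma card_adj_succ_split {n : ℕ} (G : SimpleGraph (Fin (n + 1))) (v : Fin (n + 1)) :
    haveI := Classical.decRel G.Adj
    Nat.card {w : Fin (n + 1) // G.Adj v w} =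
      if G.Adj v 0 then #({x | G.Adj v x.succ} : Finset (Fin n)) + 1
      else #({x | G.Adj v x.succ} : Finset (Fin n)) := by
  classical
  rw [natCard_adj]
  exact Fin.card_filter_univ_succ (fun x => G.Adj v x)

private lemma extGraph_even {n : ℕ} (H : SimpleGraph (Fin n)) (v : Fin (n + 1)) :
    Even (Nat.card {w : Fin (n + 1) // (extGraph H).Adj v w}) := by
  classical
  rw [card_adj_succ_split]
  induction v using Fin.cases with
  | zero =>
    rw [if_neg ((extGraph H).loopless.irrefl 0)]
    have hset : ({x | (extGraph H).Adj 0 x.succ} : Finset (Fin n)) =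
        ({x | Odd (H.degree x)} : Finset (Fin n)) := by
      ext x
      simp only [Finset.mem_filter, Finset.mem_univ, true_and, extGraph_adj_zero,
        natCard_adj_degree]
    rw [hset]
    exact H.even_card_odd_degree_vertices
  | succ v' =>
    have hset : ({x | (extGraph H).Adj v'.succ x.succ} : Finset (Fin n)) =
        ({x | H.Adj v' x} : Finset (Fin n)) := by
      ext x; simp only [Finset.mem_filter, Finset.mem_univ, true_and, extGraph_adj_succ]
    have hd : (extGraph H).Adj v'.succ 0 ↔ Odd (H.degree v') := by
      rw [(extGraph H).adj_comm, extGraph_adj_zero, natCard_adj_degree]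
    rw [hset]
    have : #({x | H.Adj v' x} : Finset (Fin n)) = H.degree v' := by
      rw [degree, neighborFinset_eq_filter]
    rw [this]
    by_cases h : Odd (H.degree v')
    · rw [if_pos (hd.mpr h)]
      exact h.add_one
    · rw [if_neg (fun hadj => h (hd.mp hadj))]
      exact Nat.not_odd_iff_even.mp h

private def evenEquiv (n : ℕ) :
    {G : SimpleGraph (Fin (n + 1)) //
        ∀ v : Fin (n + 1), Even (Nat.card {w : Fin (n + 1) // G.Adj v w})} ≃
      SimpleGraph (Fin n) where
  toFun G := SimpleGraph.comap Fin.succ G.1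
  invFun H := ⟨extGraph H, extGraph_even H⟩
  left_inv := by
    classical
    rintro ⟨G, hG⟩
    apply Subtype.ext
    change extGraph (G.comap Fin.succ) = G
    have key : ∀ b : Fin n, (Odd (Nat.card {w : Fin n // (G.comap Fin.succ).Adj b w}) ↔
        G.Adj b.succ 0) := by
      intro b
      have hsplit := card_adj_succ_split G b.succ
      have hset : ({x | G.Adj b.succ x.succ} : Finset (Fin n)) =
          ({w | (G.comap Fin.succ).Adj b w} : Finset (Fin n)) := by
        ext x; simp only [Finset.mem_filter, Finset.mem_univ, true_and, comap_adj]
      rw [hset, ← natCard_adj] at hsplit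
      have hev := hG b.succ
      by_cases h : G.Adj b.succ 0
      · rw [if_pos h] at hsplit
        constructor
        · intro _; exact h
        · intro _
          rcases hev with ⟨k, hk⟩
          rw [hsplit] at hk
          exact ⟨k - 1, by omega⟩
      · rw [if_neg h] at hsplit
        constructor
        · intro hodd
          exact absurd (hsplit ▸ hev) (Nat.not_even_iff_odd.mpr hodd)
        · intro h'; exact absurd h' h
    ext a b
    induction a using Fin.cases with
    | zero =>
      induction b using Fin.cases with
      | zero => simp [(extGraph _).loopless.irrefl 0, G.loopless.irrefl 0]
      | succ b' =>
        rw [extGraph_adj_zero, key b', G.adj_comm]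
    | succ a' =>
      induction b using Fin.cases with
      | zero =>
        rw [(extGraph _).adj_comm, extGraph_adj_zero, key a']
      | succ b' =>
        rw [extGraph_adj_succ]
        simp [comap_adj]
  right_inv H := by
    ext a b
    simp [comap_adj, extGraph_adj_succ]

theorem stmt6 (n : ℕ) :
    Nat.card {G : SimpleGraph (Fin n) //
        ∀ v : Fin n, Even (Nat.card {w : Fin n // G.Adj v w})} =
      2 ^ ((n - 1).choose 2) := by
  cases n with
  | zero =>
    haveI : Unique {G : SimpleGraph (Fin 0) //
        ∀ v : Fin 0, Even (Nat.card {w : Fin 0 // G.Adj v w})} :=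
      { default := ⟨⊥, fun v => v.elim0⟩
        uniq := by
          rintro ⟨G, hG⟩
          apply Subtype.ext
          ext v w
          exact v.elim0 }
    simp [Nat.card_unique]
  | succ m =>
    rw [Nat.card_congr (evenEquiv m), card_simpleGraph]
    simp
end

section
/- Let λ ∈ ℝ^d with λ_{i,j} ∈ {0, π/2} for all i < j, and let G_λ be the graph on {1,...,n} with edge {i,j} iff λ_{i,j} = π/2. Then |ψ(λ)| = 1 if and only if every vertex of G_λ has even degree. -/
open scoped BigOperators Real

/-- Sign of a Boolean: encodes an element of `{-1,1}`. -/
noncomputable def sgn (b : Bool) : ℝ := if b then 1 else -1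

/-- `λ · Z(y)` where `Z(y) = (y_i y_j)_{i<j}`. -/
noncomputable def dotZ (n : ℕ) (lam : Fin n → Fin n → ℝ) (y : Fin n → Bool) : ℝ :=
  ∑ p ∈ Finset.univ.filter (fun p : Fin n × Fin n => p.1 < p.2),
    lam p.1 p.2 * sgn (y p.1) * sgn (y p.2)

/-- Characteristic function `ψ(λ) = 2^{-n} ∑_{y ∈ {-1,1}^n} e^{i λ · Z(y)}`. -/
noncomputable def psi (n : ℕ) (lam : Fin n → Fin n → ℝ) : ℂ :=
  (1 / 2 ^ n : ℂ) * ∑ y : Fin n → Bool, Complex.exp (Complex.I * (dotZ n lam y : ℝ))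

open Finset Complex

lemma exp_I_pi_half : Complex.exp (Complex.I * ((π/2 : ℝ) : ℂ)) = Complex.I := by
  rw [mul_comm, Complex.exp_mul_I, ← Complex.ofReal_cos, ← Complex.ofReal_sin,
    Real.cos_pi_div_two, Real.sin_pi_div_two]
  simp

lemma exp_pihalf_sgn (b c : Bool) :
    Complex.exp (Complex.I * ((π/2 * sgn b * sgn c : ℝ) : ℂ)) =
      Complex.I * ((sgn b : ℂ) * (sgn c : ℂ)) := by
  have hpos : Complex.exp (Complex.I * ((π : ℂ)/2)) = Complex.I := by
    have := exp_I_pi_half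
    rwa [Complex.ofReal_div, Complex.ofReal_ofNat] at this
  have hneg : Complex.exp (-(Complex.I * ((π : ℂ)/2))) = -Complex.I := by
    rw [Complex.exp_neg, hpos, Complex.inv_I]
  cases b <;> cases c <;> simp [sgn] <;>
    first
      | exact hpos
      | exact hneg

lemma sum_sgn_pow (d : ℕ) :
    ∑ b : Bool, ((sgn b : ℂ)) ^ d = if Even d then 2 else 0 := by
  rw [Fintype.sum_bool]
  simp only [sgn, if_true, if_false, Bool.cond_true]
  by_cases h : Even d
  · simp [h, Even.neg_one_pow h]
    norm_num
  · simp [h, Odd.neg_one_pow (Nat.not_even_iff_odd.mp h)]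

theorem stmt7 (n : ℕ) (hn : 3 ≤ n) (lam : Fin n → Fin n → ℝ)
    (hval : ∀ i j : Fin n, i < j → lam i j = 0 ∨ lam i j = π / 2) :
    ‖psi n lam‖ = 1 ↔
      ∀ k : Fin n,
        Even (Set.ncard {i : Fin n |
          (i < k ∧ lam i k = π / 2) ∨ (k < i ∧ lam k i = π / 2)}) := by
  classical
  set E : Finset (Fin n × Fin n) :=
    univ.filter (fun p : Fin n × Fin n => p.1 < p.2 ∧ lam p.1 p.2 = π/2) with hE
  set deg : Fin n → ℕ := fun k =>
    #(E.filter (fun p => p.1 = k)) + #(E.filter (fun p => p.2 = k)) with hdeg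
  -- The set in the statement has cardinality `deg k`.
  have hdegcard : ∀ k : Fin n,
      Set.ncard {i : Fin n | (i < k ∧ lam i k = π / 2) ∨ (k < i ∧ lam k i = π / 2)}
        = deg k := by
    intro k
    have hset : {i : Fin n | (i < k ∧ lam i k = π / 2) ∨ (k < i ∧ lam k i = π / 2)} =
        ↑(univ.filter fun i : Fin n =>
          (i < k ∧ lam i k = π / 2) ∨ (k < i ∧ lam k i = π / 2)) := by
      ext i; simp
    have hinj1 : Function.Injective (fun i : Fin n => (i, k)) :=
      fun a b hab => congrArg Prod.fst hab
    have hinj2 : Function.Injective (fun i : Fin n => (k, i)) :=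
      fun a b hab => congrArg Prod.snd hab
    have himg1 : E.filter (fun p => p.2 = k) =
        (univ.filter fun i : Fin n => i < k ∧ lam i k = π/2).image (fun i => (i, k)) := by
      ext p
      obtain ⟨a, b⟩ := p
      simp only [mem_filter, mem_image, mem_univ, true_and, hE]
      constructor
      · rintro ⟨⟨h1, h2⟩, h3⟩
        subst h3
        exact ⟨a, ⟨h1, h2⟩, rfl⟩
      · rintro ⟨i, ⟨h1, h2⟩, h3⟩
        obtain ⟨rfl, rfl⟩ := Prod.mk.injEq .. ▸ h3
        exact ⟨⟨h1, h2⟩, rfl⟩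
    have himg2 : E.filter (fun p => p.1 = k) =
        (univ.filter fun i : Fin n => k < i ∧ lam k i = π/2).image (fun i => (k, i)) := by
      ext p
      obtain ⟨a, b⟩ := p
      simp only [mem_filter, mem_image, mem_univ, true_and, hE]
      constructor
      · rintro ⟨⟨h1, h2⟩, h3⟩
        subst h3
        exact ⟨b, ⟨h1, h2⟩, rfl⟩
      · rintro ⟨i, ⟨h1, h2⟩, h3⟩
        obtain ⟨rfl, rfl⟩ := Prod.mk.injEq .. ▸ h3
        exact ⟨⟨h1, h2⟩, rfl⟩
    rw [hset, Set.ncard_coe_finset, filter_or, card_union_of_disjoint]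
    · show _ = #(E.filter fun p => p.1 = k) + #(E.filter fun p => p.2 = k)
      rw [himg1, himg2, Finset.card_image_of_injective _ hinj1,
        Finset.card_image_of_injective _ hinj2, add_comm]
    · rw [Finset.disjoint_filter]
      rintro i _ ⟨hik, _⟩ ⟨hki, _⟩
      exact absurd (hik.trans hki) (lt_irrefl i)
  -- exponential term as a product over edges
  have hexp : ∀ y : Fin n → Bool,
      Complex.exp (Complex.I * ((dotZ n lam y : ℝ) : ℂ)) =
        Complex.I ^ #E * ∏ k : Fin n, ((sgn (y k) : ℂ)) ^ deg k := by
    intro y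
    have step1 : Complex.exp (Complex.I * ((dotZ n lam y : ℝ) : ℂ)) =
        ∏ p ∈ E, Complex.I * ((sgn (y p.1) : ℂ) * (sgn (y p.2) : ℂ)) := by
      rw [dotZ, Complex.ofReal_sum, Finset.mul_sum, Complex.exp_sum]
      have hsub : E ⊆ univ.filter (fun p : Fin n × Fin n => p.1 < p.2) := by
        intro p hp
        simp only [mem_filter, hE] at hp ⊢
        exact ⟨hp.1, hp.2.1⟩
      rw [← Finset.prod_subset hsub]
      · apply Finset.prod_congr rfl
        intro p hp
        simp only [mem_filter, hE] at hp
        rw [hp.2.2]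
        exact exp_pihalf_sgn (y p.1) (y p.2)
      · intro p hp hpE
        simp only [mem_filter, mem_univ, true_and] at hp
        have : lam p.1 p.2 = 0 := by
          rcases hval p.1 p.2 hp with h | h
          · exact h
          · exact absurd (by simp [hE, hp, h]) hpE
        rw [this]
        simp
    rw [step1, Finset.prod_mul_distrib, Finset.prod_const, Finset.prod_mul_distrib]
    congr 1
    have hfst : ∏ p ∈ E, ((sgn (y p.1) : ℂ)) =
        ∏ k : Fin n, ((sgn (y k) : ℂ)) ^ #(E.filter (fun p => p.1 = k)) := by
      rw [Finset.prod_comp (fun k => ((sgn (y k) : ℂ))) Prod.fst]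
      apply Finset.prod_subset (Finset.subset_univ _)
      intro k _ hk
      have : E.filter (fun p => p.1 = k) = ∅ := by
        rw [Finset.filter_eq_empty_iff]
        intro p hp hpk
        exact hk (Finset.mem_image.mpr ⟨p, hp, hpk⟩)
      rw [this]
      simp
    have hsnd : ∏ p ∈ E, ((sgn (y p.2) : ℂ)) =
        ∏ k : Fin n, ((sgn (y k) : ℂ)) ^ #(E.filter (fun p => p.2 = k)) := by
      rw [Finset.prod_comp (fun k => ((sgn (y k) : ℂ))) Prod.snd]
      apply Finset.prod_subset (Finset.subset_univ _)
      intro k _ hk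
      have : E.filter (fun p => p.2 = k) = ∅ := by
        rw [Finset.filter_eq_empty_iff]
        intro p hp hpk
        exact hk (Finset.mem_image.mpr ⟨p, hp, hpk⟩)
      rw [this]
      simp
    rw [hfst, hsnd, ← Finset.prod_mul_distrib]
    apply Finset.prod_congr rfl
    intro k _
    rw [← pow_add, hdeg]
  -- compute psi
  have hpsi : psi n lam = (1 / 2 ^ n : ℂ) * Complex.I ^ #E *
      ∏ k : Fin n, (if Even (deg k) then (2 : ℂ) else 0) := by
    rw [psi]
    simp_rw [hexp]
    rw [← Finset.mul_sum, ← mul_assoc]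
    congr 1
    have := (Fintype.prod_sum (fun (k : Fin n) (b : Bool) => ((sgn b : ℂ)) ^ deg k)).symm
    rw [this]
    apply Finset.prod_congr rfl
    intro k _
    exact sum_sgn_pow (deg k)
  constructor
  · intro h k
    rw [hdegcard k]
    by_contra hk
    have : psi n lam = 0 := by
      rw [hpsi]
      rw [Finset.prod_eq_zero (Finset.mem_univ k) (by rw [if_neg hk])]
      ring
    rw [this] at h
    simp at h
  · intro h
    have hall : ∀ k : Fin n, Even (deg k) := by
      intro k
      have := h k
      rwa [hdegcard k] at this
    have : psi n lam = Complex.I ^ #E := by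
      rw [hpsi]
      have hprod : ∏ k : Fin n, (if Even (deg k) then (2 : ℂ) else 0) = 2 ^ n := by
        rw [Finset.prod_congr rfl (fun k _ => if_pos (hall k)), Finset.prod_const,
          Finset.card_univ, Fintype.card_fin]
      rw [hprod]
      have h2 : (2 : ℂ) ^ n ≠ 0 := pow_ne_zero n two_ne_zero
      field_simp
    rw [this, norm_pow, Complex.norm_I, one_pow]
end

section
/- The set Λ = {λ ∈ [-π,π)^d : |ψ(λ)| = 1} has cardinality 2^{2d - n + 1}, where d = C(n,2), and the multiset {ψ(λ) : λ ∈ Λ} contains each of 1, -1, i, -i exactly 2^{2d-n-1} times. -/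
open scoped BigOperators Real

/-- `ψ` for `λ` indexed by pairs `i < j`. -/
noncomputable def psiP (n : ℕ) (lam : {p : Fin n × Fin n // p.1 < p.2} → ℝ) : ℂ :=
  psi n (fun i j => if h : i < j then lam ⟨(i, j), h⟩ else 0)

namespace Stmt9

abbrev P (n : ℕ) := {p : Fin n × Fin n // p.1 < p.2}

noncomputable def F {n : ℕ} (lam : P n → ℝ) (y : Fin n → Bool) : ℝ :=
  ∑ p : P n, lam p * sgn (y p.1.1) * sgn (y p.1.2)

lemma dotZ_eq {n : ℕ} (lam : P n → ℝ) (y : Fin n → Bool) :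
    dotZ n (fun i j => if h : i < j then lam ⟨(i, j), h⟩ else 0) y = F lam y := by
  rw [dotZ, Finset.sum_subtype (p := fun q : Fin n × Fin n => q.1 < q.2)
    (Finset.univ.filter (fun p : Fin n × Fin n => p.1 < p.2))
    (by intro x; simp)
    (fun q => (if h : q.1 < q.2 then lam ⟨(q.1, q.2), h⟩ else 0) * sgn (y q.1) * sgn (y q.2))]
  refine Finset.sum_congr rfl fun p _ => ?_
  rw [dif_pos p.2]

lemma psiP_eq {n : ℕ} (lam : P n → ℝ) :
    psiP n lam = (1 / 2 ^ n : ℂ) * ∑ y : Fin n → Bool, Complex.exp (Complex.I * (F lam y : ℝ)) := by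
  have h : ∀ y : Fin n → Bool,
      dotZ n (fun i j => if h : i < j then lam ⟨(i, j), h⟩ else 0) y = F lam y := dotZ_eq lam
  rw [psiP, psi]
  exact congrArg _ (Finset.sum_congr rfl fun y _ => by rw [h y])


noncomputable def cs {n : ℕ} (lam : P n → ℝ) (y : Fin n → Bool) : ℝ :=
  ∑ p : P n, if y p.1.1 ≠ y p.1.2 then lam p else 0

lemma F_one {n : ℕ} (lam : P n → ℝ) : F lam (fun _ => true) = ∑ p : P n, lam p := by
  refine Finset.sum_congr rfl fun p _ => ?_
  simp [sgn]

lemma F_eq {n : ℕ} (lam : P n → ℝ) (y : Fin n → Bool) :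
    F lam y = F lam (fun _ => true) - 2 * cs lam y := by
  have key : ∀ p : P n, lam p * sgn (y p.1.1) * sgn (y p.1.2)
      = lam p - 2 * (if y p.1.1 ≠ y p.1.2 then lam p else 0) := by
    intro p
    cases h1 : y p.1.1 <;> cases h2 : y p.1.2 <;> simp [sgn, h1, h2] <;> ring
  rw [F, Finset.sum_congr rfl (fun p _ => key p), Finset.sum_sub_distrib, F_one, cs,
    Finset.mul_sum]

def Good {n : ℕ} (lam : P n → ℝ) : Prop := ∀ y : Fin n → Bool, ∃ m : ℤ, cs lam y = π * m

lemma exp_eq_exp_iff {x x' : ℝ} :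
    Complex.exp (Complex.I * (x : ℝ)) = Complex.exp (Complex.I * (x' : ℝ)) ↔
      ∃ m : ℤ, x - x' = 2 * π * m := by
  rw [Complex.exp_eq_exp_iff_exists_int]
  constructor
  · rintro ⟨m, hm⟩
    refine ⟨m, ?_⟩
    have h1 : (Complex.I) * ((x : ℂ) - x' - (2 * π * m)) = 0 := by
      push_cast; linear_combination hm
    have h2 : ((x : ℂ) - x' - (2 * π * m)) = 0 := by
      rcases mul_eq_zero.mp h1 with h | h
      · exact absurd h Complex.I_ne_zero
      · exact h
    have h3 : ((x - x' - 2 * π * m : ℝ) : ℂ) = 0 := by push_cast; linear_combination h2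
    have h4 := Complex.ofReal_eq_zero.mp h3
    linarith
  · rintro ⟨m, hm⟩
    refine ⟨m, ?_⟩
    have : (x : ℂ) = (x' : ℂ) + 2 * π * m := by exact_mod_cast congrArg (fun t : ℝ => (t : ℂ)) (by linarith)
    rw [this]; ring

lemma good_iff {n : ℕ} (lam : P n → ℝ) :
    Good lam ↔ ∀ y : Fin n → Bool,
      Complex.exp (Complex.I * (F lam y : ℝ))
        = Complex.exp (Complex.I * (F lam (fun _ => true) : ℝ)) := by
  constructor
  · intro hg y
    obtain ⟨m, hm⟩ := hg y
    rw [exp_eq_exp_iff]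
    exact ⟨-m, by rw [F_eq lam y, hm]; push_cast; ring⟩
  · intro hg y
    obtain ⟨m, hm⟩ := exp_eq_exp_iff.mp (hg y)
    refine ⟨-m, ?_⟩
    rw [F_eq lam y] at hm
    push_cast
    linarith

lemma psiP_of_good {n : ℕ} (lam : P n → ℝ) (hg : Good lam) :
    psiP n lam = Complex.exp (Complex.I * (F lam (fun _ => true) : ℝ)) := by
  rw [psiP_eq, Finset.sum_congr rfl (fun y _ => (good_iff lam).mp hg y),
    Finset.sum_const, Finset.card_univ]
  have : (Fintype.card (Fin n → Bool) : ℂ) = 2 ^ n := by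
    simp [Fintype.card_fun]
  rw [nsmul_eq_mul, this]
  field_simp

lemma abs_psiP_le_one {n : ℕ} (lam : P n → ℝ) : True := trivial

lemma abs_psiP_eq_one_iff {n : ℕ} (lam : P n → ℝ) :
    ‖psiP n lam‖ = 1 ↔ Good lam := by
  constructor
  · intro h
    rw [good_iff]
    set e : (Fin n → Bool) → ℂ := fun y => Complex.exp (Complex.I * (F lam y : ℝ)) with he
    have habs : ∀ y, ‖e y‖ = 1 := fun y => by
      simp [he, Complex.norm_exp, Complex.mul_re]
    set S : ℂ := ∑ y : Fin n → Bool, e y with hS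
    have hpsi : psiP n lam = (1 / 2 ^ n : ℂ) * S := psiP_eq lam
    set w : ℂ := psiP n lam with hwdef
    have hw1 : ‖w‖ = 1 := h
    have hSw : S = (2 ^ n : ℂ) * w := by
      rw [hpsi, ← mul_assoc]
      field_simp
    have hww : (starRingEnd ℂ) w * w = 1 := by
      rw [mul_comm, Complex.mul_conj, Complex.normSq_eq_norm_sq, hw1]
      norm_num
    have hle : ∀ y : Fin n → Bool, ((starRingEnd ℂ) w * e y).re ≤ 1 := by
      intro y
      calc ((starRingEnd ℂ) w * e y).re ≤ ‖(starRingEnd ℂ) w * e y‖ :=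
            Complex.re_le_norm _
        _ = 1 := by rw [norm_mul, Complex.norm_conj, hw1, habs, one_mul]
    have hsum : ∑ y : Fin n → Bool, ((starRingEnd ℂ) w * e y).re = 2 ^ n := by
      have : ((starRingEnd ℂ) w * S).re = (2 ^ n : ℝ) := by
        rw [hSw, ← mul_assoc, mul_comm ((starRingEnd ℂ) w) ((2:ℂ)^n), mul_assoc, hww, mul_one]
        rw [show ((2:ℂ)^n) = (((2^n : ℕ) : ℝ) : ℂ) by push_cast; ring, Complex.ofReal_re]
        push_cast; ring
      rw [← this, Finset.mul_sum, Complex.re_sum]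
    have hall : ∀ y : Fin n → Bool, ((starRingEnd ℂ) w * e y).re = 1 := by
      have h2 : ∑ y : Fin n → Bool, ((starRingEnd ℂ) w * e y).re
          = ∑ _y : Fin n → Bool, (1 : ℝ) := by
        rw [hsum, Finset.sum_const, Finset.card_univ]
        simp [Fintype.card_fun]
      intro y
      exact (Finset.sum_eq_sum_iff_of_le (fun i _ => hle i)).mp h2 y (Finset.mem_univ y)
    have heq : ∀ y : Fin n → Bool, e y = w := by
      intro y
      set z : ℂ := (starRingEnd ℂ) w * e y with hz
      have hzabs : ‖z‖ = 1 := by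
        rw [hz, norm_mul, Complex.norm_conj, hw1, habs, one_mul]
      have hzre : z.re = 1 := hall y
      have hzim : z.im = 0 := by
        have h4 : Complex.normSq z = 1 := by
          rw [← Complex.sq_norm, hzabs]; norm_num
        rw [Complex.normSq_apply] at h4
        nlinarith [sq_nonneg z.im]
      have hz1 : z = 1 := Complex.ext (by rw [hzre]; rfl) (by rw [hzim]; rfl)
      have hww' : w * (starRingEnd ℂ) w = 1 := by rw [mul_comm]; exact hww
      calc e y = (w * (starRingEnd ℂ) w) * e y := by rw [hww', one_mul]
        _ = w * z := by rw [hz]; ring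
        _ = w := by rw [hz1, mul_one]
    intro y
    exact (heq y).trans (heq (fun _ => true)).symm
  · intro hg
    rw [psiP_of_good lam hg, Complex.norm_exp]
    simp [Complex.mul_re]


def rep (x : ZMod 4) : ℤ := if x.val ≤ 1 then (x.val : ℤ) else (x.val : ℤ) - 4

def c2 : ZMod 4 →+* ZMod 2 := ZMod.castHom (show 2 ∣ 4 by norm_num) (ZMod 2)

lemma rep_injective : Function.Injective rep := by intro x y; revert x y; decide

lemma rep_cast : ∀ x : ZMod 4, ((rep x : ℤ) : ZMod 4) = x := by decide

lemma rep_cast2 : ∀ x : ZMod 4, ((rep x : ℤ) : ZMod 2) = c2 x := by decide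

lemma rep_range : ∀ x : ZMod 4, -2 ≤ rep x ∧ rep x ≤ 1 := by decide

lemma rep_of_int (m : ℤ) (h1 : -2 ≤ m) (h2 : m ≤ 1) : rep ((m : ZMod 4)) = m := by
  interval_cases m <;> decide

noncomputable def lamOf {n : ℕ} (a : P n → ZMod 4) : P n → ℝ :=
  fun p => (π / 2) * rep (a p)

lemma lamOf_injective {n : ℕ} : Function.Injective (lamOf (n := n)) := by
  intro a b hab
  funext p
  have := congrFun hab p
  have hpi : (π / 2) ≠ 0 := by positivity
  rw [lamOf, lamOf] at this
  have h2 : (rep (a p) : ℝ) = (rep (b p) : ℝ) := mul_left_cancel₀ hpi this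
  exact rep_injective (by exact_mod_cast h2)

lemma lamOf_mem_Ico {n : ℕ} (a : P n → ZMod 4) (p : P n) :
    lamOf a p ∈ Set.Ico (-π) π := by
  obtain ⟨h1, h2⟩ := rep_range (a p)
  have hpi : (0:ℝ) < π := Real.pi_pos
  constructor
  · rw [lamOf]
    have : (-2 : ℝ) ≤ (rep (a p) : ℝ) := by exact_mod_cast h1
    nlinarith
  · rw [lamOf]
    have : (rep (a p) : ℝ) ≤ 1 := by exact_mod_cast h2
    nlinarith


noncomputable def E {n : ℕ} (lam : P n → ℝ) (k : Fin n) : ℝ :=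
  ∑ p : P n, if p.1.1 = k ∨ p.1.2 = k then lam p else 0

def yOne {n : ℕ} (k : Fin n) : Fin n → Bool := fun j => !decide (j = k)

def yTwo {n : ℕ} (k l : Fin n) : Fin n → Bool := fun j => !(decide (j = k) || decide (j = l))

lemma cs_yOne {n : ℕ} (lam : P n → ℝ) (k : Fin n) : cs lam (yOne k) = E lam k := by
  refine Finset.sum_congr rfl fun p _ => ?_
  have hne : p.1.1 ≠ p.1.2 := ne_of_lt p.2
  by_cases h1 : p.1.1 = k <;> by_cases h2 : p.1.2 = k
  · exact absurd (h1.trans h2.symm) hne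
  all_goals simp [yOne, h1, h2]

lemma cs_yTwo {n : ℕ} (lam : P n → ℝ) {k l : Fin n} (hkl : k < l) :
    cs lam (yTwo k l) = E lam k + E lam l - 2 * lam ⟨(k,l),hkl⟩ := by
  have key : ∀ p : P n, (if yTwo k l p.1.1 ≠ yTwo k l p.1.2 then lam p else 0)
      = (if p.1.1 = k ∨ p.1.2 = k then lam p else 0)
      + (if p.1.1 = l ∨ p.1.2 = l then lam p else 0)
      - 2 * (if p = (⟨(k,l),hkl⟩ : P n) then lam p else 0) := by
    intro p
    have hne : p.1.1 ≠ p.1.2 := ne_of_lt p.2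
    have hkl' : k ≠ l := ne_of_lt hkl
    have hpeq : (p = (⟨(k,l),hkl⟩ : P n)) ↔ (p.1.1 = k ∧ p.1.2 = l) := by
      constructor
      · rintro rfl; exact ⟨rfl, rfl⟩
      · rintro ⟨ha, hb⟩
        exact Subtype.ext (Prod.ext ha hb)
    by_cases h1 : p.1.1 = k <;> by_cases h2 : p.1.2 = k <;>
      by_cases h3 : p.1.1 = l <;> by_cases h4 : p.1.2 = l
    all_goals try exact absurd (h1.trans h2.symm) hne
    all_goals try exact absurd (h3.trans h4.symm) hne
    all_goals try exact absurd (h1.symm.trans h3) hkl'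
    all_goals try exact absurd (h2.symm.trans h4) hkl'
    all_goals try exact absurd (show l < k by rw [← h3, ← h2]; exact p.2) (lt_asymm hkl)
    all_goals simp [yTwo, hpeq, h1, h2, h3, h4, hkl', Ne.symm hkl'] <;> try ring
  rw [cs, Finset.sum_congr rfl (fun p _ => key p)]
  rw [Finset.sum_sub_distrib, Finset.sum_add_distrib]
  rw [← Finset.mul_sum, Finset.sum_ite_eq' Finset.univ (⟨(k,l),hkl⟩ : P n) lam]
  simp [E]

lemma good_pi_half {n : ℕ} (lam : P n → ℝ) (hg : Good lam) :
    ∀ p : P n, ∃ m : ℤ, lam p = (π / 2) * m := by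
  rintro ⟨⟨k, l⟩, hkl⟩
  obtain ⟨m1, hm1⟩ := hg (yOne k)
  obtain ⟨m2, hm2⟩ := hg (yOne l)
  obtain ⟨m3, hm3⟩ := hg (yTwo k l)
  rw [cs_yOne] at hm1 hm2
  rw [cs_yTwo lam hkl] at hm3
  refine ⟨m1 + m2 - m3, ?_⟩
  push_cast
  rw [hm1, hm2] at hm3
  linarith


lemma cast_sum_ite {α : Type*} [Fintype α] (R : Type*) [Ring R] (c : α → Prop)
    [DecidablePred c] (m : α → ℤ) :
    ((∑ x : α, if c x then m x else 0 : ℤ) : R) = ∑ x : α, if c x then ((m x : R)) else 0 := by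
  rw [show ((∑ x : α, if c x then m x else 0 : ℤ) : R)
      = (Int.castRingHom R) (∑ x : α, if c x then m x else 0) from rfl, map_sum]
  refine Finset.sum_congr rfl fun x _ => ?_
  split <;> simp

lemma sum_ite_scale {n : ℕ} (c : P n → Prop) [DecidablePred c] (m : P n → ℤ) :
    ∑ p : P n, (if c p then (π/2) * (m p : ℝ) else 0)
      = (π/2) * ((∑ p : P n, if c p then m p else 0 : ℤ) : ℝ) := by
  rw [cast_sum_ite ℝ c m, Finset.mul_sum]
  refine Finset.sum_congr rfl fun p _ => ?_
  split <;> ring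

lemma sum_cut_eq {n : ℕ} (b : P n → ZMod 2) (y : Fin n → Bool) :
    (∑ p : P n, if y p.1.1 ≠ y p.1.2 then b p else 0)
      = ∑ k : Fin n, (if y k then 0 else 1) *
          (∑ p : P n, if p.1.1 = k ∨ p.1.2 = k then b p else 0) := by
  have step1 : ∀ k : Fin n, (if y k then (0:ZMod 2) else 1) *
      (∑ p : P n, if p.1.1 = k ∨ p.1.2 = k then b p else 0)
      = ∑ p : P n, (if p.1.1 = k ∨ p.1.2 = k then (if y k then (0:ZMod 2) else 1) * b p else 0) := by
    intro k
    rw [Finset.mul_sum]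
    refine Finset.sum_congr rfl fun p _ => ?_
    split <;> simp
  rw [Finset.sum_congr rfl (fun k _ => step1 k), Finset.sum_comm]
  refine Finset.sum_congr rfl fun p _ => ?_
  have hne : p.1.1 ≠ p.1.2 := ne_of_lt p.2
  have split2 : ∀ k : Fin n, (if p.1.1 = k ∨ p.1.2 = k then (if y k then (0:ZMod 2) else 1) * b p else 0)
      = (if p.1.1 = k then (if y k then (0:ZMod 2) else 1) * b p else 0)
        + (if p.1.2 = k then (if y k then (0:ZMod 2) else 1) * b p else 0) := by
    intro k
    by_cases e1 : p.1.1 = k <;> by_cases e2 : p.1.2 = k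
    · exact absurd (e1.trans e2.symm) hne
    all_goals simp [e1, e2]
  rw [Finset.sum_congr rfl (fun k _ => split2 k), Finset.sum_add_distrib,
    Finset.sum_ite_eq Finset.univ p.1.1 (fun k => (if y k then (0:ZMod 2) else 1) * b p),
    Finset.sum_ite_eq Finset.univ p.1.2 (fun k => (if y k then (0:ZMod 2) else 1) * b p)]
  simp only [Finset.mem_univ, if_true]
  cases hy1 : y p.1.1 <;> cases hy2 : y p.1.2 <;> simp [hy1, hy2]
  rw [← two_mul, show (2 : ZMod 2) = 0 from rfl, zero_mul]

def memA {n : ℕ} (a : P n → ZMod 4) : Prop :=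
  ∀ k : Fin n, (∑ p : P n, if p.1.1 = k ∨ p.1.2 = k then c2 (a p) else 0) = 0

lemma good_lamOf {n : ℕ} (a : P n → ZMod 4) (ha : memA a) : Good (lamOf a) := by
  intro y
  have hcs : cs (lamOf a) y
      = (π/2) * ((∑ p : P n, if y p.1.1 ≠ y p.1.2 then rep (a p) else 0 : ℤ) : ℝ) := by
    rw [cs, ← sum_ite_scale _ (fun p => rep (a p))]
    rfl
  set N : ℤ := ∑ p : P n, if y p.1.1 ≠ y p.1.2 then rep (a p) else 0 with hN
  have hN2 : ((N : ℤ) : ZMod 2) = 0 := by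
    rw [hN, cast_sum_ite (ZMod 2) _ (fun p => rep (a p)),
      Finset.sum_congr rfl (fun p _ => by rw [rep_cast2 (a p)]),
      sum_cut_eq (fun p => c2 (a p)) y]
    rw [Finset.sum_congr rfl (fun k _ => by rw [ha k])]
    simp
  obtain ⟨t, ht⟩ := (ZMod.intCast_zmod_eq_zero_iff_dvd N 2).mp hN2
  refine ⟨t, ?_⟩
  rw [hcs, ht]
  push_cast
  ring

lemma good_imp {n : ℕ} (lam : P n → ℝ) (hr : ∀ p, lam p ∈ Set.Ico (-π) π) (hg : Good lam) :
    ∃ a : P n → ZMod 4, memA a ∧ lam = lamOf a := by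
  choose m hm using good_pi_half lam hg
  have hpi : (0:ℝ) < π := Real.pi_pos
  have hpi2 : (0:ℝ) < π/2 := by linarith
  have hm_range : ∀ p, -2 ≤ m p ∧ m p ≤ 1 := by
    intro p
    obtain ⟨hl, hu⟩ := hr p
    rw [hm p] at hl hu
    constructor
    · by_contra h'
      push_neg at h'
      have h3' : m p ≤ -3 := by omega
      have h3 : (m p : ℝ) ≤ -3 := by exact_mod_cast h3'
      nlinarith
    · by_contra h'
      push_neg at h'
      have h3' : (2 : ℤ) ≤ m p := by omega
      have h3 : (2 : ℝ) ≤ (m p : ℝ) := by exact_mod_cast h3'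
      nlinarith
  have hrep : ∀ p : P n, rep ((m p : ZMod 4)) = m p := fun p =>
    rep_of_int (m p) (hm_range p).1 (hm_range p).2
  refine ⟨fun p => ((m p : ZMod 4)), ?_, ?_⟩
  · intro k
    obtain ⟨t, ht⟩ := hg (yOne k)
    rw [cs_yOne] at ht
    have hE : E lam k = (π/2) * ((∑ p : P n, if p.1.1 = k ∨ p.1.2 = k then m p else 0 : ℤ) : ℝ) := by
      rw [E, ← sum_ite_scale _ m]
      refine Finset.sum_congr rfl fun p _ => ?_
      rw [hm p]
    set M : ℤ := ∑ p : P n, if p.1.1 = k ∨ p.1.2 = k then m p else 0 with hM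
    have hM2 : M = 2 * t := by
      rw [hE] at ht
      have h4 : (π/2) * (M:ℝ) = (π/2) * ((2*t : ℤ) : ℝ) := by
        push_cast
        linear_combination ht
      have h5 := mul_left_cancel₀ (ne_of_gt hpi2) h4
      exact_mod_cast h5
    have hgoal : (∑ p : P n, if p.1.1 = k ∨ p.1.2 = k then c2 ((m p : ZMod 4)) else 0)
        = ∑ p : P n, if p.1.1 = k ∨ p.1.2 = k then ((m p : ℤ) : ZMod 2) else 0 := by
      refine Finset.sum_congr rfl fun p _ => ?_
      have hc : c2 ((m p : ZMod 4)) = ((m p : ℤ) : ZMod 2) := by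
        rw [← rep_cast2, hrep p]
      rw [hc]
    rw [hgoal, ← cast_sum_ite (ZMod 2) _ m, ← hM, ZMod.intCast_zmod_eq_zero_iff_dvd]
    exact ⟨t, hM2⟩
  · funext p
    rw [lamOf, hrep p, hm p]


def T {n : ℕ} (a : P n → ZMod 4) : ZMod 4 := ∑ p : P n, a p

lemma exp_I_pi_half_int (r : ℤ) :
    Complex.exp (Complex.I * ((π/2 * r : ℝ) : ℂ)) = Complex.I ^ r := by
  have h1 : Complex.I * ((π/2 * r : ℝ) : ℂ) = r * (((π/2 : ℝ) : ℂ) * Complex.I) := by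
    push_cast; ring
  rw [h1, Complex.exp_int_mul]
  congr 1
  rw [Complex.exp_mul_I, ← Complex.ofReal_cos, ← Complex.ofReal_sin,
    Real.cos_pi_div_two, Real.sin_pi_div_two]
  simp

lemma psiP_lamOf {n : ℕ} (a : P n → ZMod 4) (ha : memA a) :
    psiP n (lamOf a) = Complex.I ^ ((T a).val) := by
  rw [psiP_of_good _ (good_lamOf a ha), F_one]
  set R : ℤ := ∑ p : P n, rep (a p) with hR
  have hsum : (∑ p : P n, lamOf a p) = π/2 * (R : ℝ) := by
    rw [hR, show ((∑ p : P n, rep (a p) : ℤ) : ℝ)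
      = ∑ p : P n, ((rep (a p) : ℤ) : ℝ) from map_sum (Int.castRingHom ℝ) _ _, Finset.mul_sum]
    rfl
  rw [hsum, exp_I_pi_half_int R]
  have hmod : ((R : ℤ) : ZMod 4) = T a := by
    rw [hR, show ((∑ p : P n, rep (a p) : ℤ) : ZMod 4)
      = ∑ p : P n, ((rep (a p) : ℤ) : ZMod 4) from map_sum (Int.castRingHom (ZMod 4)) _ _]
    exact Finset.sum_congr rfl fun p _ => rep_cast (a p)
  have hval : (((T a).val : ℤ) : ZMod 4) = T a := by
    push_cast
    exact ZMod.natCast_rightInverse (T a)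
  obtain ⟨s, hs⟩ : ((4:ℕ):ℤ) ∣ (R - ((T a).val : ℤ)) := by
    rw [← ZMod.intCast_zmod_eq_zero_iff_dvd, Int.cast_sub, hmod, hval, sub_self]
  have hR' : R = ((T a).val : ℤ) + 4 * s := by push_cast at hs; linarith
  rw [hR', zpow_add₀ Complex.I_ne_zero, zpow_natCast,
    show ((4 : ℤ) * s) = ((4:ℕ) : ℤ) * s by norm_num, zpow_mul, zpow_natCast,
    Complex.I_pow_four, one_zpow, mul_one]


lemma two_choose_two : ∀ n : ℕ, 2 * n.choose 2 = n * n - n := by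
  intro n
  induction n with
  | zero => rfl
  | succ k ih =>
    have h1 : (k+1).choose 2 = k.choose 1 + k.choose 2 := Nat.choose_succ_succ k 1
    have h2 : k.choose 1 = k := Nat.choose_one_right k
    have h3 : k ≤ k * k := by nlinarith
    have h4 : (k+1) * (k+1) = k * k + 2 * k + 1 := by ring
    omega

lemma card_P (n : ℕ) : Fintype.card (P n) = n.choose 2 := by
  rw [Fintype.card_subtype]
  have hswap : (Finset.univ.filter fun p : Fin n × Fin n => p.1 < p.2).card
      = (Finset.univ.filter fun p : Fin n × Fin n => p.2 < p.1).card := by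
    apply Finset.card_bij (fun p _ => Prod.swap p)
    · intro p hp
      simp only [Finset.mem_filter, Finset.mem_univ, true_and] at hp ⊢
      exact hp
    · intro p _ q _ h
      exact Prod.swap_injective h
    · intro q hq
      simp only [Finset.mem_filter, Finset.mem_univ, true_and] at hq
      exact ⟨Prod.swap q, by simp only [Finset.mem_filter, Finset.mem_univ, true_and]; exact hq,
        by simp⟩
  have hunion : (Finset.univ.filter fun p : Fin n × Fin n => p.1 < p.2)
      ∪ (Finset.univ.filter fun p : Fin n × Fin n => p.2 < p.1)
      = Finset.univ.filter fun p : Fin n × Fin n => p.1 ≠ p.2 := by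
    rw [← Finset.filter_or]
    refine Finset.filter_congr fun p _ => ?_
    constructor
    · rintro (h|h)
      · exact ne_of_lt h
      · exact (ne_of_lt h).symm
    · exact fun h => lt_or_gt_of_ne h
  have hdisj : Disjoint (Finset.univ.filter fun p : Fin n × Fin n => p.1 < p.2)
      (Finset.univ.filter fun p : Fin n × Fin n => p.2 < p.1) := by
    rw [Finset.disjoint_left]
    intro p hp hq
    simp only [Finset.mem_filter, Finset.mem_univ, true_and] at hp hq
    exact absurd (hp.trans hq) (lt_irrefl _)
  have hne_card : (Finset.univ.filter fun p : Fin n × Fin n => p.1 ≠ p.2).card = n * n - n := by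
    have : (Finset.univ.filter fun p : Fin n × Fin n => p.1 ≠ p.2)
        = (Finset.univ : Finset (Fin n)).offDiag := by
      ext p
      simp [Finset.mem_offDiag]
    rw [this, Finset.offDiag_card]
    simp
  have hcard := Finset.card_union_of_disjoint hdisj
  rw [hunion, hne_card, ← hswap] at hcard
  have h2 := two_choose_two n
  omega

lemma n_le_d {n : ℕ} (hn : 3 ≤ n) : n + 1 ≤ 2 * n.choose 2 := by
  have h1 := two_choose_two n
  have h2 : 3 * n ≤ n * n := Nat.mul_le_mul_right n hn
  omega

lemma sum_inc {n : ℕ} {M : Type*} [AddCommMonoid M] (p : P n) (x : M) :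
    (∑ k : Fin n, if p.1.1 = k ∨ p.1.2 = k then x else 0) = x + x := by
  have hne : p.1.1 ≠ p.1.2 := ne_of_lt p.2
  have split2 : ∀ k : Fin n, (if p.1.1 = k ∨ p.1.2 = k then x else 0)
      = (if p.1.1 = k then x else 0) + (if p.1.2 = k then x else 0) := by
    intro k
    by_cases e1 : p.1.1 = k <;> by_cases e2 : p.1.2 = k
    · exact absurd (e1.trans e2.symm) hne
    all_goals simp [e1, e2]
  rw [Finset.sum_congr rfl (fun k _ => split2 k), Finset.sum_add_distrib,
    Finset.sum_ite_eq Finset.univ p.1.1 (fun _ => x), Finset.sum_ite_eq Finset.univ p.1.2 (fun _ => x)]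
  simp

def Phi (n : ℕ) : (P n → ZMod 4) →+ (Fin n → ZMod 2) where
  toFun a := fun k => ∑ p : P n, if p.1.1 = k ∨ p.1.2 = k then c2 (a p) else 0
  map_zero' := by funext k; simp
  map_add' := by
    intro a b
    funext k
    show (∑ p : P n, if p.1.1 = k ∨ p.1.2 = k then c2 ((a + b) p) else 0)
      = (∑ p : P n, if p.1.1 = k ∨ p.1.2 = k then c2 (a p) else 0)
        + (∑ p : P n, if p.1.1 = k ∨ p.1.2 = k then c2 (b p) else 0)
    rw [← Finset.sum_add_distrib]
    refine Finset.sum_congr rfl fun p _ => ?_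
    rw [Pi.add_apply, map_add]
    split <;> simp

lemma memA_iff {n : ℕ} (a : P n → ZMod 4) : memA a ↔ Phi n a = 0 := by
  rw [funext_iff]
  rfl

def sumHom (n : ℕ) : (Fin n → ZMod 2) →+ ZMod 2 where
  toFun v := ∑ k, v k
  map_zero' := by simp
  map_add' := by intro a b; simp [Finset.sum_add_distrib]

def liftZ (t : ZMod 2) : ZMod 4 := if t = 1 then 1 else 0

lemma c2_liftZ : ∀ t : ZMod 2, c2 (liftZ t) = t := by decide

lemma range_Phi {n : ℕ} (hn : 0 < n) : (Phi n).range = (sumHom n).ker := by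
  haveI : NeZero n := ⟨by omega⟩
  apply le_antisymm
  · rintro v ⟨a, rfl⟩
    show sumHom n (Phi n a) = 0
    show (∑ k, ∑ p : P n, if p.1.1 = k ∨ p.1.2 = k then c2 (a p) else 0) = 0
    rw [Finset.sum_comm]
    rw [Finset.sum_congr rfl (fun p _ => sum_inc p (c2 (a p)))]
    refine Finset.sum_eq_zero fun p _ => ?_
    rw [← two_mul, show (2 : ZMod 2) = 0 from rfl, zero_mul]
  · intro v hv
    have hv0 : (∑ k, v k) = 0 := hv
    refine ⟨fun p => if p.1.1 = 0 then liftZ (v p.1.2) else 0, ?_⟩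
    funext k
    show (∑ p : P n, if p.1.1 = k ∨ p.1.2 = k
      then c2 (if p.1.1 = 0 then liftZ (v p.1.2) else 0) else 0) = v k
    by_cases hk : k = 0
    · subst hk
      have key : ∀ p : P n, (if p.1.1 = 0 ∨ p.1.2 = 0
          then c2 (if p.1.1 = 0 then liftZ (v p.1.2) else 0) else 0)
          = (if p.1.1 = 0 then v p.1.2 else 0) := by
        intro p
        have h2 : ¬ (p.1.2 = 0) := by
          intro h
          have := p.2
          rw [h] at this
          exact absurd this (by simp [Fin.lt_def])
        by_cases h1 : p.1.1 = 0 <;> simp [h1, h2, c2_liftZ]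
      rw [Finset.sum_congr rfl (fun p _ => key p)]
      have hbij : (∑ p : P n, if p.1.1 = 0 then v p.1.2 else 0)
          = ∑ j ∈ Finset.univ.erase (0 : Fin n), v j := by
        rw [← Finset.sum_filter]
        apply Finset.sum_bij (fun (p : P n) _ => p.1.2)
        · intro p hp
          simp only [Finset.mem_filter, Finset.mem_univ, true_and] at hp
          refine Finset.mem_erase.mpr ⟨?_, Finset.mem_univ _⟩
          intro h
          have := p.2
          rw [hp, h] at this
          exact absurd this (lt_irrefl _)
        · intro p hp q hq h
          simp only [Finset.mem_filter, Finset.mem_univ, true_and] at hp hq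
          exact Subtype.ext (Prod.ext (hp.trans hq.symm) h)
        · intro j hj
          obtain ⟨hj0, -⟩ := Finset.mem_erase.mp hj
          have hpos : (0 : Fin n) < j := (Fin.pos_iff_ne_zero' j).mpr hj0
          exact ⟨⟨(0, j), hpos⟩, Finset.mem_filter.mpr ⟨Finset.mem_univ _, rfl⟩, rfl⟩
        · intro p hp
          rfl
      rw [hbij]
      have := Finset.sum_erase_add Finset.univ v (Finset.mem_univ (0 : Fin n))
      rw [hv0] at this
      have h4 : (∑ j ∈ Finset.univ.erase (0 : Fin n), v j) = - v 0 := by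
        linear_combination this
      rw [h4]
      exact (CharTwo.neg_eq _)
    · have hk0 : (0 : Fin n) < k := (Fin.pos_iff_ne_zero' k).mpr hk
      have key : ∀ p : P n, (if p.1.1 = k ∨ p.1.2 = k
          then c2 (if p.1.1 = 0 then liftZ (v p.1.2) else 0) else 0)
          = (if p = (⟨(0, k), hk0⟩ : P n) then v k else 0) := by
        intro p
        have hpeq : (p = (⟨(0,k), hk0⟩ : P n)) ↔ (p.1.1 = 0 ∧ p.1.2 = k) := by
          constructor
          · rintro rfl; exact ⟨rfl, rfl⟩
          · rintro ⟨ha, hb⟩; exact Subtype.ext (Prod.ext ha hb)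
        by_cases h1 : p.1.1 = 0 <;> by_cases h2 : p.1.2 = k <;>
          by_cases h3 : p.1.1 = k
        all_goals try exact absurd (h1.symm.trans h3) (fun h => hk h.symm)
        all_goals simp [hpeq, h1, h2, h3, c2_liftZ, hk, Ne.symm hk]
      rw [Finset.sum_congr rfl (fun p _ => key p),
        Finset.sum_ite_eq' Finset.univ (⟨(0,k), hk0⟩ : P n) (fun _ => v k)]
      simp


lemma card_ker_mul_card_range {G H : Type*} [AddCommGroup G] [AddCommGroup H] (f : G →+ H) :
    Nat.card f.ker * Nat.card f.range = Nat.card G := by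
  rw [AddSubgroup.card_eq_card_quotient_mul_card_addSubgroup f.ker,
    Nat.card_congr (QuotientAddGroup.quotientKerEquivRange f).toEquiv]
  ring

lemma card_fiber_eq {G H : Type*} [AddCommGroup G] [AddCommGroup H] (f : G →+ H)
    (c : H) (x0 : G) (hx0 : f x0 = c) :
    Nat.card {x : G // f x = c} = Nat.card f.ker := by
  apply Nat.card_congr
  refine ⟨fun x => ⟨x.1 - x0, ?_⟩, fun y => ⟨y.1 + x0, ?_⟩, ?_, ?_⟩
  · rw [AddMonoidHom.mem_ker, map_sub, x.2, hx0, sub_self]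
  · rw [map_add, AddMonoidHom.mem_ker.mp y.2, hx0, zero_add]
  · intro x; ext; simp
  · intro y; ext; simp

lemma card_evensum {n : ℕ} (hn : 0 < n) : Nat.card (sumHom n).ker = 2 ^ (n - 1) := by
  haveI : NeZero n := ⟨by omega⟩
  have hsurj : Function.Surjective (sumHom n) := by
    intro c
    refine ⟨fun k => if k = 0 then c else 0, ?_⟩
    show (∑ k : Fin n, if k = 0 then c else 0) = c
    rw [Finset.sum_ite_eq' Finset.univ (0 : Fin n) (fun _ => c)]
    simp
  have h1 := card_ker_mul_card_range (sumHom n)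
  rw [AddMonoidHom.range_eq_top.mpr hsurj,
    Nat.card_congr AddSubgroup.topEquiv.toEquiv] at h1
  have h2 : Nat.card (ZMod 2) = 2 := by simp [Nat.card_eq_fintype_card]
  have h3 : Nat.card (Fin n → ZMod 2) = 2 ^ n := by
    simp [Nat.card_eq_fintype_card]
  rw [h2, h3] at h1
  have h4 : 2 ^ n = 2 ^ (n - 1) * 2 := by
    rw [← pow_succ]
    congr 1
    omega
  rw [h4] at h1
  exact Nat.eq_of_mul_eq_mul_right (by norm_num) h1

lemma card_kerPhi {n : ℕ} (hn : 3 ≤ n) :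
    Nat.card (Phi n).ker = 2 ^ (2 * n.choose 2 - n + 1) := by
  have h1 := card_ker_mul_card_range (Phi n)
  rw [range_Phi (by omega), card_evensum (by omega)] at h1
  have hdom : Nat.card (P n → ZMod 4) = 2 ^ (2 * n.choose 2) := by
    rw [Nat.card_eq_fintype_card, Fintype.card_fun, card_P]
    rw [show (Fintype.card (ZMod 4)) = 2^2 by simp, ← pow_mul]
  rw [hdom] at h1
  have hle := n_le_d hn
  have hsplit : 2 ^ (2 * n.choose 2) = 2 ^ (2 * n.choose 2 - n + 1) * 2 ^ (n - 1) := by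
    rw [← pow_add]
    congr 1
    omega
  rw [hsplit] at h1
  exact Nat.eq_of_mul_eq_mul_right (by positivity) h1

def Thom (n : ℕ) : (P n → ZMod 4) →+ ZMod 4 where
  toFun a := ∑ p, a p
  map_zero' := by simp
  map_add' := by intro a b; simp [Finset.sum_add_distrib]

lemma Phi_delta {n : ℕ} (e : P n) (k : Fin n) :
    Phi n (fun p => if p = e then 1 else 0) k = if e.1.1 = k ∨ e.1.2 = k then 1 else 0 := by
  show (∑ p : P n, if p.1.1 = k ∨ p.1.2 = k then c2 (if p = e then 1 else 0) else 0) = _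
  have key : ∀ p : P n, (if p.1.1 = k ∨ p.1.2 = k then c2 (if p = e then 1 else 0) else 0)
      = (if p = e then (if p.1.1 = k ∨ p.1.2 = k then 1 else 0) else 0) := by
    intro p
    by_cases h1 : p = e <;> by_cases h2 : p.1.1 = k ∨ p.1.2 = k <;> simp [h1, h2]
  rw [Finset.sum_congr rfl (fun p _ => key p),
    Finset.sum_ite_eq' Finset.univ e (fun p => if p.1.1 = k ∨ p.1.2 = k then (1 : ZMod 2) else 0)]
  simp

lemma Thom_delta {n : ℕ} (e : P n) :
    Thom n (fun p => if p = e then 1 else 0) = 1 := by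
  show (∑ p : P n, if p = e then (1 : ZMod 4) else 0) = 1
  rw [Finset.sum_ite_eq' Finset.univ e (fun _ => (1 : ZMod 4))]
  simp

lemma exists_triangle {n : ℕ} (hn : 3 ≤ n) :
    ∃ t : P n → ZMod 4, memA t ∧ T t = 3 := by
  have h0 : 0 < n := by omega
  set v0 : Fin n := ⟨0, by omega⟩ with hv0
  set v1 : Fin n := ⟨1, by omega⟩ with hv1
  set v2 : Fin n := ⟨2, by omega⟩ with hv2
  have h01 : v0 < v1 := by simp [hv0, hv1, Fin.lt_def]
  have h02 : v0 < v2 := by simp [hv0, hv2, Fin.lt_def]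
  have h12 : v1 < v2 := by simp [hv1, hv2, Fin.lt_def]
  set e01 : P n := ⟨(v0, v1), h01⟩ with he01
  set e02 : P n := ⟨(v0, v2), h02⟩ with he02
  set e12 : P n := ⟨(v1, v2), h12⟩ with he12
  set t : P n → ZMod 4 := (fun p => if p = e01 then 1 else 0)
    + ((fun p => if p = e02 then 1 else 0) + (fun p => if p = e12 then 1 else 0)) with ht
  refine ⟨t, ?_, ?_⟩
  · intro k
    show Phi n t k = 0
    rw [ht, map_add, map_add]
    rw [Pi.add_apply, Pi.add_apply, Phi_delta, Phi_delta, Phi_delta]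
    have hne01 : v0 ≠ v1 := ne_of_lt h01
    have hne02 : v0 ≠ v2 := ne_of_lt h02
    have hne12 : v1 ≠ v2 := ne_of_lt h12
    show ((if v0 = k ∨ v1 = k then (1 : ZMod 2) else 0)
      + ((if v0 = k ∨ v2 = k then 1 else 0) + (if v1 = k ∨ v2 = k then 1 else 0))) = 0
    by_cases hk0 : v0 = k <;> by_cases hk1 : v1 = k <;> by_cases hk2 : v2 = k
    all_goals try exact absurd (hk0.trans hk1.symm) hne01
    all_goals try exact absurd (hk0.trans hk2.symm) hne02
    all_goals try exact absurd (hk1.trans hk2.symm) hne12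
    all_goals simp [hk0, hk1, hk2]
    all_goals decide
  · show Thom n t = 3
    rw [ht, map_add, map_add, Thom_delta, Thom_delta, Thom_delta]
    rfl


noncomputable def U (n : ℕ) : (Phi n).ker →+ ZMod 4 :=
  (Thom n).comp ((Phi n).ker.subtype)

lemma U_surj {n : ℕ} (hn : 3 ≤ n) : Function.Surjective (U n) := by
  obtain ⟨t, ht, hT⟩ := exists_triangle hn
  have htk : t ∈ (Phi n).ker := AddMonoidHom.mem_ker.mpr ((memA_iff t).mp ht)
  intro κ
  refine ⟨⟨(3 * κ).val • t, AddSubgroup.nsmul_mem _ htk _⟩, ?_⟩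
  show Thom n ((3 * κ).val • t) = κ
  rw [map_nsmul]
  have hTt : Thom n t = 3 := hT
  rw [hTt, nsmul_eq_mul]
  rw [show (((3 * κ).val : ℕ) : ZMod 4) = 3 * κ from ZMod.natCast_rightInverse _]
  ring_nf
  rw [show (9 : ZMod 4) = 1 from rfl, mul_one]

lemma card_fiber {n : ℕ} (hn : 3 ≤ n) (κ : ZMod 4) :
    Nat.card {a : P n → ZMod 4 // memA a ∧ T a = κ} = 2 ^ (2 * n.choose 2 - n - 1) := by
  have e1 : {a : P n → ZMod 4 // memA a ∧ T a = κ} ≃ {x : (Phi n).ker // U n x = κ} :=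
    { toFun := fun a => ⟨⟨a.1, AddMonoidHom.mem_ker.mpr ((memA_iff a.1).mp a.2.1)⟩, a.2.2⟩
      invFun := fun x => ⟨x.1.1, (memA_iff x.1.1).mpr (AddMonoidHom.mem_ker.mp x.1.2), x.2⟩
      left_inv := fun a => rfl
      right_inv := fun x => rfl }
  rw [Nat.card_congr e1]
  obtain ⟨x0, hx0⟩ := U_surj hn κ
  rw [card_fiber_eq (U n) κ x0 hx0]
  have h1 := card_ker_mul_card_range (U n)
  rw [AddMonoidHom.range_eq_top.mpr (U_surj hn),
    Nat.card_congr AddSubgroup.topEquiv.toEquiv] at h1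
  have h2 : Nat.card (ZMod 4) = 4 := by simp [Nat.card_eq_fintype_card]
  rw [h2, show Nat.card (Phi n).ker = 2 ^ (2 * n.choose 2 - n + 1) from card_kerPhi hn] at h1
  have hle := n_le_d hn
  have hsplit : 2 ^ (2 * n.choose 2 - n + 1) = 2 ^ (2 * n.choose 2 - n - 1) * 4 := by
    rw [show (4:ℕ) = 2^2 by norm_num, ← pow_add]
    congr 1
    omega
  rw [hsplit] at h1
  exact Nat.eq_of_mul_eq_mul_right (by norm_num) h1

lemma card_sol {n : ℕ} (hn : 3 ≤ n) :
    Nat.card {lam : P n → ℝ //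
        (∀ p, lam p ∈ Set.Ico (-π) π) ∧ ‖psiP n lam‖ = 1}
      = 2 ^ (2 * n.choose 2 - n + 1) := by
  let f : {a : P n → ZMod 4 // memA a} → {lam : P n → ℝ //
      (∀ p, lam p ∈ Set.Ico (-π) π) ∧ ‖psiP n lam‖ = 1} :=
    fun a => ⟨lamOf a.1, fun p => lamOf_mem_Ico a.1 p,
      (abs_psiP_eq_one_iff _).mpr (good_lamOf a.1 a.2)⟩
  have hf : Function.Bijective f := by
    constructor
    · intro a b hab
      exact Subtype.ext (lamOf_injective (congrArg Subtype.val hab))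
    · rintro ⟨lam, hr, habs⟩
      obtain ⟨a, ha, rfl⟩ := good_imp lam hr ((abs_psiP_eq_one_iff lam).mp habs)
      exact ⟨⟨a, ha⟩, rfl⟩
  rw [← Nat.card_congr (Equiv.ofBijective f hf),
    Nat.card_congr (Equiv.subtypeEquivRight
      (fun a => (memA_iff a).trans (AddMonoidHom.mem_ker (f := Phi n)).symm))]
  exact card_kerPhi hn

lemma I_pow_nat_inj : ∀ i j : ℕ, i < 4 → j < 4 → Complex.I ^ i = Complex.I ^ j → i = j := by
  intro i j hi hj h
  interval_cases i <;> interval_cases j <;>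
    first
      | rfl
      | (exfalso; revert h; norm_num [pow_succ, Complex.ext_iff])

lemma I_pow_val_inj {v w : ZMod 4} (h : Complex.I ^ v.val = Complex.I ^ w.val) : v = w :=
  ZMod.val_injective 4 (I_pow_nat_inj _ _ v.val_lt w.val_lt h)

lemma card_val {n : ℕ} (hn : 3 ≤ n) (κ : ZMod 4) :
    Nat.card {lam : P n → ℝ //
        (∀ p, lam p ∈ Set.Ico (-π) π) ∧ psiP n lam = Complex.I ^ κ.val}
      = 2 ^ (2 * n.choose 2 - n - 1) := by
  let f : {a : P n → ZMod 4 // memA a ∧ T a = κ} → {lam : P n → ℝ //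
      (∀ p, lam p ∈ Set.Ico (-π) π) ∧ psiP n lam = Complex.I ^ κ.val} :=
    fun a => ⟨lamOf a.1, fun p => lamOf_mem_Ico a.1 p, by
      rw [psiP_lamOf a.1 a.2.1, a.2.2]⟩
  have hf : Function.Bijective f := by
    constructor
    · intro a b hab
      exact Subtype.ext (lamOf_injective (congrArg Subtype.val hab))
    · rintro ⟨lam, hr, hval⟩
      have habs : ‖psiP n lam‖ = 1 := by
        rw [hval, norm_pow, Complex.norm_I, one_pow]
      obtain ⟨a, ha, rfl⟩ := good_imp lam hr ((abs_psiP_eq_one_iff lam).mp habs)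
      have hTa : T a = κ := by
        apply I_pow_val_inj
        rw [← psiP_lamOf a ha, hval]
      exact ⟨⟨a, ha, hTa⟩, rfl⟩
  rw [← Nat.card_congr (Equiv.ofBijective f hf)]
  exact card_fiber hn κ

end Stmt9

theorem stmt9 (n : ℕ) (hn : 3 ≤ n) :
    Nat.card {lam : {p : Fin n × Fin n // p.1 < p.2} → ℝ //
        (∀ p, lam p ∈ Set.Ico (-π) π) ∧ ‖psiP n lam‖ = 1} =
      2 ^ (2 * n.choose 2 - n + 1) ∧
    ∀ c ∈ ({1, -1, Complex.I, -Complex.I} : Set ℂ),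
      Nat.card {lam : {p : Fin n × Fin n // p.1 < p.2} → ℝ //
          (∀ p, lam p ∈ Set.Ico (-π) π) ∧ psiP n lam = c} =
        2 ^ (2 * n.choose 2 - n - 1) := by

  constructor
  · exact Stmt9.card_sol hn
  · intro c hc
    simp only [Set.mem_insert_iff, Set.mem_singleton_iff] at hc
    rcases hc with rfl | rfl | rfl | rfl
    · rw [show (1:ℂ) = Complex.I ^ ((0 : ZMod 4)).val by
        rw [show ((0 : ZMod 4)).val = 0 from rfl, pow_zero]]
      exact Stmt9.card_val hn 0
    · rw [show (-1:ℂ) = Complex.I ^ ((2 : ZMod 4)).val by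
        rw [show ((2 : ZMod 4)).val = 2 from rfl, Complex.I_sq]]
      exact Stmt9.card_val hn 2
    · rw [show (Complex.I) = Complex.I ^ ((1 : ZMod 4)).val by
        rw [show ((1 : ZMod 4)).val = 1 from rfl, pow_one]]
      exact Stmt9.card_val hn 1
    · rw [show (-Complex.I) = Complex.I ^ ((3 : ZMod 4)).val by
        rw [show ((3 : ZMod 4)).val = 3 from rfl, pow_succ, Complex.I_sq]
        ring]
      exact Stmt9.card_val hn 3
end

section
/- For all λ ∈ ℝ^d and every k ∈ {1,...,n}: |ψ(λ)|² ≤ 1/2 + (1/2) ∏_{i ≠ k} cos(2 λ_{i,k}). -/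
open scoped BigOperators Real

/- Auxiliary definitions -/

noncomputable def lamk {n : ℕ} (lam : Fin n → Fin n → ℝ) (k i : Fin n) : ℝ :=
  if i < k then lam i k else lam k i

noncomputable def Sk {n : ℕ} (lam : Fin n → Fin n → ℝ) (k : Fin n) (y : Fin n → Bool) : ℝ :=
  ∑ i ∈ Finset.univ.filter (fun i : Fin n => i ≠ k), lamk lam k i * sgn (y i)

noncomputable def Rk {n : ℕ} (lam : Fin n → Fin n → ℝ) (k : Fin n) (y : Fin n → Bool) : ℝ :=
  ∑ p ∈ Finset.univ.filter
      (fun p : Fin n × Fin n => p.1 < p.2 ∧ ¬(p.1 = k ∨ p.2 = k)),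
    lam p.1 p.2 * sgn (y p.1) * sgn (y p.2)

lemma sgn_not (b : Bool) : sgn (!b) = - sgn b := by cases b <;> simp [sgn]

lemma abs_sgn (b : Bool) : |sgn b| = 1 := by cases b <;> simp [sgn]

/-- The flip of coordinate `k`. -/
def flipk {n : ℕ} (k : Fin n) (y : Fin n → Bool) : Fin n → Bool :=
  Function.update y k (!y k)

lemma flipk_involutive {n : ℕ} (k : Fin n) : Function.Involutive (flipk k) := by
  intro y
  funext i
  by_cases h : i = k
  · subst h; simp [flipk]
  · simp [flipk, Function.update_of_ne h]

lemma flipk_apply_ne {n : ℕ} (k : Fin n) (y : Fin n → Bool) {i : Fin n} (h : i ≠ k) :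
    flipk k y i = y i := Function.update_of_ne h _ _

lemma flipk_apply_self {n : ℕ} (k : Fin n) (y : Fin n → Bool) :
    flipk k y k = !y k := Function.update_self _ _ _

lemma Sk_flipk {n : ℕ} (lam : Fin n → Fin n → ℝ) (k : Fin n) (y : Fin n → Bool) :
    Sk lam k (flipk k y) = Sk lam k y := by
  unfold Sk
  refine Finset.sum_congr rfl fun i hi => ?_
  rw [flipk_apply_ne k y (Finset.mem_filter.mp hi).2]

lemma Rk_flipk {n : ℕ} (lam : Fin n → Fin n → ℝ) (k : Fin n) (y : Fin n → Bool) :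
    Rk lam k (flipk k y) = Rk lam k y := by
  unfold Rk
  refine Finset.sum_congr rfl fun p hp => ?_
  obtain ⟨-, -, h⟩ := Finset.mem_filter.mp hp
  push_neg at h
  rw [flipk_apply_ne k y h.1, flipk_apply_ne k y h.2]

/-- Decomposition of `dotZ` isolating the terms involving `k`. -/
lemma dotZ_decomp {n : ℕ} (lam : Fin n → Fin n → ℝ) (k : Fin n) (y : Fin n → Bool) :
    dotZ n lam y = sgn (y k) * Sk lam k y + Rk lam k y := by
  classical
  unfold dotZ
  rw [← Finset.sum_filter_add_sum_filter_not _ (fun p : Fin n × Fin n => p.1 = k ∨ p.2 = k)]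
  have h1 : (Finset.univ.filter (fun p : Fin n × Fin n => p.1 < p.2)).filter
      (fun p => p.1 = k ∨ p.2 = k)
      = Finset.univ.filter (fun p : Fin n × Fin n => p.1 < p.2 ∧ (p.1 = k ∨ p.2 = k)) := by
    rw [Finset.filter_filter]
  have h2 : (Finset.univ.filter (fun p : Fin n × Fin n => p.1 < p.2)).filter
      (fun p => ¬(p.1 = k ∨ p.2 = k))
      = Finset.univ.filter (fun p : Fin n × Fin n => p.1 < p.2 ∧ ¬(p.1 = k ∨ p.2 = k)) := by
    rw [Finset.filter_filter]
  rw [h1, h2]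
  have key : ∑ i ∈ Finset.univ.filter (fun i : Fin n => i ≠ k),
        sgn (y k) * (lamk lam k i * sgn (y i))
      = ∑ p ∈ Finset.univ.filter
        (fun p : Fin n × Fin n => p.1 < p.2 ∧ (p.1 = k ∨ p.2 = k)),
        lam p.1 p.2 * sgn (y p.1) * sgn (y p.2) := by
    refine Finset.sum_nbij' (fun a => if a < k then (a, k) else (k, a))
      (fun p => if p.1 = k then p.2 else p.1) ?_ ?_ ?_ ?_ ?_
    · intro i hi
      simp only [Finset.mem_filter, Finset.mem_univ, true_and] at hi ⊢
      rcases lt_or_gt_of_ne hi with h | h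
      · rw [if_pos h]; exact ⟨h, Or.inr rfl⟩
      · rw [if_neg (asymm h)]; exact ⟨h, Or.inl rfl⟩
    · intro p hp
      simp only [Finset.mem_filter, Finset.mem_univ, true_and] at hp ⊢
      obtain ⟨hlt, hor⟩ := hp
      by_cases h1 : p.1 = k
      · rw [if_pos h1]; exact ne_of_gt (h1 ▸ hlt)
      · rw [if_neg h1]; exact h1
    · intro i hi
      simp only [Finset.mem_filter, Finset.mem_univ, true_and] at hi
      beta_reduce
      rcases lt_or_gt_of_ne hi with h | h
      · rw [if_pos h]; simp only [if_neg hi]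
      · rw [if_neg (asymm h)]; simp
    · intro p hp
      simp only [Finset.mem_filter, Finset.mem_univ, true_and] at hp
      obtain ⟨hlt, hor⟩ := hp
      beta_reduce
      by_cases h1 : p.1 = k
      · rw [if_pos h1]
        beta_reduce
        rw [if_neg (asymm (h1 ▸ hlt))]
        rw [← h1]
      · have h2 : p.2 = k := hor.resolve_left h1
        rw [if_neg h1]
        beta_reduce
        rw [if_pos (h2 ▸ hlt)]
        rw [← h2]
    · intro i hi
      simp only [Finset.mem_filter, Finset.mem_univ, true_and] at hi
      beta_reduce
      rcases lt_or_gt_of_ne hi with h | h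
      · rw [if_pos h, lamk, if_pos h]
        ring
      · rw [if_neg (asymm h), lamk, if_neg (asymm h)]
        ring
  rw [← key, ← Finset.mul_sum]
  rfl

/-- Pairing `y` with its `k`-flip. -/
lemma psi_eq_cos_form {n : ℕ} (lam : Fin n → Fin n → ℝ) (k : Fin n) :
    psi n lam = (1 / 2 ^ n : ℂ) * ∑ y : Fin n → Bool,
      Complex.exp (Complex.I * (Rk lam k y : ℝ)) * (Real.cos (Sk lam k y) : ℂ) := by
  unfold psi
  congr 1
  set f : (Fin n → Bool) → ℂ := fun y => Complex.exp (Complex.I * (dotZ n lam y : ℝ)) with hf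
  have hflip : ∑ y : Fin n → Bool, f y = ∑ y : Fin n → Bool, f (flipk k y) :=
    (Fintype.sum_equiv ((flipk_involutive k).toPerm _) _ _ (fun y => rfl)).symm
  have h2 : (2 : ℂ) * ∑ y : Fin n → Bool, f y
      = ∑ y : Fin n → Bool, (f y + f (flipk k y)) := by
    rw [Finset.sum_add_distrib, ← hflip]; ring
  have hterm : ∀ y : Fin n → Bool, f y + f (flipk k y)
      = 2 * (Complex.exp (Complex.I * (Rk lam k y : ℝ)) * (Real.cos (Sk lam k y) : ℂ)) := by
    intro y
    have hd1 : dotZ n lam y = sgn (y k) * Sk lam k y + Rk lam k y := dotZ_decomp lam k y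
    have hd2 : dotZ n lam (flipk k y) = - (sgn (y k) * Sk lam k y) + Rk lam k y := by
      rw [dotZ_decomp lam k (flipk k y), Sk_flipk, Rk_flipk, flipk_apply_self, sgn_not]
      ring
    rw [hf]
    simp only [hd1, hd2]
    push_cast
    rw [mul_add, Complex.exp_add, mul_add, Complex.exp_add]
    have hc : Complex.exp (Complex.I * (↑(sgn (y k)) * ↑(Sk lam k y)))
        + Complex.exp (Complex.I * -(↑(sgn (y k)) * ↑(Sk lam k y)))
        = 2 * Complex.cos ((Sk lam k y : ℝ) : ℂ) := by
      cases hb : y k <;>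
      · simp only [sgn, hb, if_true, if_false]
        push_cast
        rw [Complex.cos]
        ring_nf
    calc Complex.exp (Complex.I * (↑(sgn (y k)) * ↑(Sk lam k y)))
          * Complex.exp (Complex.I * ↑(Rk lam k y))
        + Complex.exp (Complex.I * -(↑(sgn (y k)) * ↑(Sk lam k y)))
          * Complex.exp (Complex.I * ↑(Rk lam k y))
        = (Complex.exp (Complex.I * (↑(sgn (y k)) * ↑(Sk lam k y)))
          + Complex.exp (Complex.I * -(↑(sgn (y k)) * ↑(Sk lam k y))))
          * Complex.exp (Complex.I * ↑(Rk lam k y)) := by ring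
      _ = _ := by rw [hc, ← Complex.ofReal_cos]; ring
  have := h2.trans (Finset.sum_congr rfl fun y _ => hterm y)
  rw [← Finset.mul_sum] at this
  exact mul_left_cancel₀ (two_ne_zero) this

/-- Product formula for the average of `cos (2 S)`. -/
lemma sum_cos_two_Sk {n : ℕ} (lam : Fin n → Fin n → ℝ) (k : Fin n) :
    ∑ y : Fin n → Bool, Real.cos (2 * Sk lam k y)
      = 2 ^ n * ∏ i ∈ Finset.univ.filter (fun i : Fin n => i ≠ k),
          Real.cos (2 * lamk lam k i) := by
  classical
  set g : Fin n → Bool → ℂ := fun i b =>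
    if i = k then 1 else Complex.exp ((2 * lamk lam k i * sgn b : ℝ) * Complex.I) with hg
  have hexp : ∀ y : Fin n → Bool,
      Complex.exp ((2 * Sk lam k y : ℝ) * Complex.I) = ∏ i, g i (y i) := by
    intro y
    have : (2 * Sk lam k y : ℝ) = ∑ i ∈ Finset.univ.filter (fun i : Fin n => i ≠ k),
        2 * lamk lam k i * sgn (y i) := by
      rw [Sk, Finset.mul_sum]; refine Finset.sum_congr rfl fun i _ => by ring
    have hR : ∏ i, g i (y i) = ∏ i ∈ Finset.univ.filter (fun i : Fin n => i ≠ k),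
        Complex.exp ((2 * lamk lam k i * sgn (y i) : ℝ) * Complex.I) := by
      rw [Finset.prod_filter]
      refine (Finset.prod_congr rfl fun i _ => ?_).symm
      by_cases h : i = k
      · simp [hg, h]
      · simp [hg, h]
    rw [hR, ← Complex.exp_sum, this]
    push_cast
    rw [Finset.sum_mul]
  have hswap : ∑ y : Fin n → Bool, ∏ i, g i (y i) = ∏ i, (g i true + g i false) := by
    rw [← Fintype.prod_sum g]
    exact Finset.prod_congr rfl fun i _ => Fintype.sum_bool _
  have hgi : ∀ i : Fin n, g i true + g i false
      = 2 * (if i = k then 1 else (Real.cos (2 * lamk lam k i) : ℂ)) := by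
    intro i
    by_cases h : i = k
    · simp [hg, h]
      norm_num
    · simp only [hg, h, if_false]
      rw [Complex.ofReal_cos, Complex.cos]
      simp only [sgn, if_true, if_false]
      push_cast
      ring_nf
  have hprod : ∏ i, (g i true + g i false)
      = (2 : ℂ) ^ n * (∏ i ∈ Finset.univ.filter (fun i : Fin n => i ≠ k),
          Real.cos (2 * lamk lam k i) : ℝ) := by
    rw [Finset.prod_congr rfl fun i _ => hgi i, Finset.prod_mul_distrib,
      Finset.prod_const, Finset.card_univ, Fintype.card_fin]
    congr 1
    rw [Finset.prod_filter]
    push_cast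
    refine (Finset.prod_congr rfl fun i _ => ?_).symm
    by_cases h : i = k <;> simp [h]
  have hre : ∑ y : Fin n → Bool, Real.cos (2 * Sk lam k y)
      = (∑ y : Fin n → Bool, Complex.exp ((2 * Sk lam k y : ℝ) * Complex.I)).re := by
    rw [Complex.re_sum]
    exact Finset.sum_congr rfl fun y _ => (Complex.exp_ofReal_mul_I_re _).symm
  rw [hre]
  rw [Finset.sum_congr rfl fun y _ => hexp y, hswap, hprod]
  rw [show ((2 : ℂ) ^ n * ((∏ i ∈ Finset.univ.filter (fun i : Fin n => i ≠ k),
      Real.cos (2 * lamk lam k i) : ℝ) : ℂ))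
      = (((2 : ℝ) ^ n * ∏ i ∈ Finset.univ.filter (fun i : Fin n => i ≠ k),
        Real.cos (2 * lamk lam k i) : ℝ) : ℂ) from by push_cast; ring]
  rw [Complex.ofReal_re]

theorem stmt10 (n : ℕ) (hn : 2 ≤ n) (lam : Fin n → Fin n → ℝ) (k : Fin n) :
    (‖psi n lam‖) ^ 2 ≤
      1 / 2 + 1 / 2 * ∏ i ∈ Finset.univ.filter (fun i : Fin n => i ≠ k),
        Real.cos (2 * (if i < k then lam i k else lam k i)) := by
  classical
  have hgoalprod : (∏ i ∈ Finset.univ.filter (fun i : Fin n => i ≠ k),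
      Real.cos (2 * (if i < k then lam i k else lam k i)))
      = ∏ i ∈ Finset.univ.filter (fun i : Fin n => i ≠ k), Real.cos (2 * lamk lam k i) :=
    Finset.prod_congr rfl fun i _ => by rw [lamk]
  rw [hgoalprod]
  set C : ℝ := ∏ i ∈ Finset.univ.filter (fun i : Fin n => i ≠ k),
    Real.cos (2 * lamk lam k i) with hC
  have h2n : (0 : ℝ) < 2 ^ n := by positivity
  have hcard : (Finset.univ : Finset (Fin n → Bool)).card = 2 ^ n := by simp
  -- Step 1: |psi| ≤ 2^{-n} ∑ |cos (S y)|
  have habs : ‖psi n lam‖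
      ≤ (1 / 2 ^ n : ℝ) * ∑ y : Fin n → Bool, |Real.cos (Sk lam k y)| := by
    rw [psi_eq_cos_form lam k, norm_mul]
    have h1 : ‖(1 / 2 ^ n : ℂ)‖ = 1 / 2 ^ n := by
      simp
    rw [h1]
    refine mul_le_mul_of_nonneg_left ?_ (by positivity)
    refine (norm_sum_le _ _).trans_eq ?_
    refine Finset.sum_congr rfl fun y _ => ?_
    rw [norm_mul, Complex.norm_exp, Complex.norm_real]
    simp
  have habs' : ‖psi n lam‖ ^ 2
      ≤ ((1 / 2 ^ n : ℝ) * ∑ y : Fin n → Bool, |Real.cos (Sk lam k y)|) ^ 2 :=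
    pow_le_pow_left₀ (norm_nonneg _) habs 2
  -- Step 2: Cauchy–Schwarz
  have hCS : (∑ y : Fin n → Bool, |Real.cos (Sk lam k y)|) ^ 2
      ≤ 2 ^ n * ∑ y : Fin n → Bool, Real.cos (Sk lam k y) ^ 2 := by
    have := sq_sum_le_card_mul_sum_sq (s := (Finset.univ : Finset (Fin n → Bool)))
      (f := fun y => |Real.cos (Sk lam k y)|)
    simpa [hcard, sq_abs] using this
  -- Step 3: sum of cos²
  have hsum2 : ∑ y : Fin n → Bool, Real.cos (Sk lam k y) ^ 2
      = 2 ^ n * (1 / 2) + 1 / 2 * (2 ^ n * C) := by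
    rw [Finset.sum_congr rfl fun y _ => Real.cos_sq (Sk lam k y)]
    rw [Finset.sum_add_distrib, Finset.sum_const, hcard, ← Finset.sum_div,
      sum_cos_two_Sk lam k, ← hC]
    push_cast
    ring
  calc ‖psi n lam‖ ^ 2
      ≤ ((1 / 2 ^ n : ℝ) * ∑ y : Fin n → Bool, |Real.cos (Sk lam k y)|) ^ 2 := habs'
    _ = (1 / 2 ^ n : ℝ) ^ 2 * (∑ y : Fin n → Bool, |Real.cos (Sk lam k y)|) ^ 2 := by
        rw [mul_pow]
    _ ≤ (1 / 2 ^ n : ℝ) ^ 2 * (2 ^ n * ∑ y : Fin n → Bool, Real.cos (Sk lam k y) ^ 2) := by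
        gcongr
    _ = 1 / 2 + 1 / 2 * C := by
        rw [hsum2]
        field_simp
end

section
/- Any m-dimensional real linear subspace of ℝ^t (t ≥ m) contains at most 2^m vectors with all coordinates in {-1, 1}. -/
theorem stmt16 (t m : ℕ) (hm : m ≤ t) (W : Submodule ℝ (Fin t → ℝ))
    (hW : Module.finrank ℝ W = m) :
    Set.ncard {v : Fin t → ℝ | v ∈ W ∧ ∀ i, v i = 1 ∨ v i = -1} ≤ 2 ^ m := by
  classical
  -- coordinate functionals on W
  set π : Fin t → Module.Dual ℝ W := fun i => (LinearMap.proj i).comp W.subtype with hπ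
  have hspan : Submodule.span ℝ (Set.range π) = ⊤ := by
    apply Submodule.span_eq_top_of_ne_zero
    intro z hz
    have : (z : Fin t → ℝ) ≠ 0 := fun h => hz (Subtype.ext h)
    obtain ⟨i, hi⟩ := Function.ne_iff.mp this
    exact ⟨π i, Set.mem_range_self i, hi⟩
  obtain ⟨b, hbsub, hbspan, hbind⟩ := exists_linearIndependent ℝ (Set.range π)
  rw [hspan] at hbspan
  have hbfin : b.Finite := hbind.setFinite
  haveI : Fintype b := hbfin.fintype
  -- b is a basis of the dual, so it has m elements
  have hcard : Fintype.card b = m := by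
    let B : Module.Basis b ℝ (Module.Dual ℝ W) := Module.Basis.mk hbind (by rw [Subtype.range_coe, hbspan])
    rw [← Module.finrank_eq_card_basis B, Subspace.dual_finrank_eq, hW]
  -- choose an index for each functional in b
  have hchoice : ∀ f : b, ∃ i : Fin t, π i = (f : Module.Dual ℝ W) := fun f => hbsub f.2
  choose g hg using hchoice
  -- the key injection
  set S : Set (Fin t → ℝ) := {v : Fin t → ℝ | v ∈ W ∧ ∀ i, v i = 1 ∨ v i = -1} with hS
  have key : Set.InjOn (fun v : Fin t → ℝ => fun f : b => decide (v (g f) = 1)) S := by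
    intro v hv w hw hvw
    have heq : ∀ f : b, v (g f) = w (g f) := by
      intro f
      have h1 := congrFun hvw f
      simp only [decide_eq_decide] at h1
      rcases hv.2 (g f) with h2 | h2 <;> rcases hw.2 (g f) with h3 | h3 <;>
        simp_all
    -- the difference is in W and killed by all of b, hence by all duals
    set z : W := ⟨v, hv.1⟩ - ⟨w, hw.1⟩ with hz
    have hzb : ∀ φ ∈ b, φ z = 0 := by
      intro φ hφ
      have := heq ⟨φ, hφ⟩
      have hgz : π (g ⟨φ, hφ⟩) z = 0 := by
        simp only [hz, map_sub, hπ, LinearMap.comp_apply, LinearMap.proj_apply,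
          Submodule.coe_subtype]
        simpa [sub_eq_zero] using this
      rwa [hg ⟨φ, hφ⟩] at hgz
    have hzall : ∀ φ : Module.Dual ℝ W, φ z = 0 := by
      intro φ
      have hφmem : φ ∈ Submodule.span ℝ b := by rw [hbspan]; trivial
      refine Submodule.span_induction (fun x hx => hzb x hx) ?_ ?_ ?_ hφmem
      · simp
      · intro x y _ _ hx hy; simp [hx, hy]
      · intro a x _ hx; simp [hx]
    have hz0 : z = 0 := (Module.forall_dual_apply_eq_zero_iff ℝ z).mp hzall
    have : (⟨v, hv.1⟩ : W) = ⟨w, hw.1⟩ := by rwa [sub_eq_zero] at hz0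
    exact congrArg Subtype.val this
  calc Set.ncard S = ((fun v : Fin t → ℝ => fun f : b => decide (v (g f) = 1)) '' S).ncard :=
        (Set.ncard_image_of_injOn key).symm
    _ ≤ (Set.univ : Set (b → Bool)).ncard :=
        Set.ncard_le_ncard (Set.subset_univ _) Set.finite_univ
    _ = Fintype.card (b → Bool) := by rw [Set.ncard_univ, Nat.card_eq_fintype_card]
    _ = 2 ^ m := by simp [Fintype.card_fun, hcard]
end

section
/- For n ≥ 2 and t ≥ n, the number N_{n,t} of n × t partial Hadamard matrices satisfies N_{n,t} ≤ 2^{t - n + 1} N_{n-1,t}. Consequently, the number of n × n Hadamard matrices is at most 2^{C(n+1,2)}. -/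
open scoped BigOperators

/-- `Y` is an `n × t` partial Hadamard matrix. -/
def IsPartialHadamard (n t : ℕ) (Y : Fin n → Fin t → ℤ) : Prop :=
  (∀ i s, Y i s = 1 ∨ Y i s = -1) ∧
  ∀ i j : Fin n, i ≠ j → ∑ s : Fin t, Y i s * Y j s = 0

/-- The number of `n × t` partial Hadamard matrices. -/
noncomputable def numPH (n t : ℕ) : ℕ :=
  Nat.card {Y : Fin n → Fin t → ℤ // IsPartialHadamard n t Y}

section Aux

lemma finite_pm {t : ℕ} (P : (Fin t → ℤ) → Prop) :
    Finite {x : Fin t → ℤ // (∀ s, x s = 1 ∨ x s = -1) ∧ P x} := by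
  apply Finite.of_injective (fun x : {x : Fin t → ℤ // (∀ s, x s = 1 ∨ x s = -1) ∧ P x} =>
    (fun s => decide (x.1 s = 1) : Fin t → Bool))
  intro x y h
  apply Subtype.ext; funext s
  have hs := congrFun h s
  rcases x.2.1 s with hx | hx <;> rcases y.2.1 s with hy | hy <;>
    rw [hx, hy] <;> simp [hx, hy] at hs ⊢

lemma finitePH (n t : ℕ) : Finite {Y : Fin n → Fin t → ℤ // IsPartialHadamard n t Y} := by
  apply Finite.of_injective (fun Y : {Y : Fin n → Fin t → ℤ // IsPartialHadamard n t Y} =>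
    (fun i s => decide (Y.1 i s = 1) : Fin n → Fin t → Bool))
  intro Y Z h
  apply Subtype.ext; funext i s
  have hs := congrFun (congrFun h i) s
  rcases Y.2.1 i s with hx | hx <;> rcases Z.2.1 i s with hy | hy <;>
    rw [hx, hy] <;> simp [hx, hy] at hs ⊢

/-- Key counting lemma: the number of ±1 rows orthogonal to all rows of a
partial Hadamard matrix `R` is at most `2 ^ (t - m)`. -/
lemma extension_card_le {m t : ℕ} (ht : 0 < t) (R : Fin m → Fin t → ℤ)
    (hpm : ∀ i s, R i s = 1 ∨ R i s = -1)
    (horth : ∀ i j, i ≠ j → ∑ s : Fin t, R i s * R j s = 0) :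
    Nat.card {x : Fin t → ℤ // (∀ s, x s = 1 ∨ x s = -1) ∧
      ∀ i : Fin m, ∑ s : Fin t, R i s * x s = 0} ≤ 2 ^ (t - m) := by
  classical
  haveI := finite_pm (fun x : Fin t → ℤ => ∀ i : Fin m, ∑ s : Fin t, R i s * x s = 0)
  set col : Fin t → (Fin m → ℚ) := fun s i => (R i s : ℚ) with hcol
  have hsq : ∀ i s, (R i s : ℚ) * (R i s : ℚ) = 1 := by
    intro i s; rcases hpm i s with h | h <;> rw [h] <;> norm_num
  have hdot : ∀ i j, i ≠ j → ∑ s : Fin t, (R i s : ℚ) * (R j s : ℚ) = 0 := by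
    intro i j hij
    have := horth i j hij
    exact_mod_cast congrArg (fun z : ℤ => (z : ℚ)) this |>.trans rfl
  have hself : ∀ i, ∑ s : Fin t, (R i s : ℚ) * (R i s : ℚ) = t := by
    intro i
    rw [Finset.sum_congr rfl fun s _ => hsq i s]
    simp
  have htQ : (t : ℚ) ≠ 0 := by exact_mod_cast ht.ne'
  have hspan : Submodule.span ℚ (Set.range col) = ⊤ := by
    rw [eq_top_iff]
    rintro y -
    rw [Submodule.mem_span_range_iff_exists_fun]
    refine ⟨fun s => (∑ j, (R j s : ℚ) * y j) / t, ?_⟩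
    funext i
    rw [Finset.sum_apply]
    have hterm : ∀ s : Fin t, (((∑ j, (R j s : ℚ) * y j) / t) • col s) i
        = ∑ j, (y j / t) * ((R j s : ℚ) * (R i s : ℚ)) := by
      intro s
      rw [Pi.smul_apply, smul_eq_mul, hcol]
      rw [Finset.sum_div, Finset.sum_mul]
      exact Finset.sum_congr rfl fun j _ => by ring
    rw [Finset.sum_congr rfl fun s _ => hterm s, Finset.sum_comm]
    have hrow : ∀ j, ∑ s : Fin t, (y j / t) * ((R j s : ℚ) * (R i s : ℚ))
        = (y j / t) * ∑ s : Fin t, (R j s : ℚ) * (R i s : ℚ) := by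
      intro j; rw [Finset.mul_sum]
    rw [Finset.sum_congr rfl fun j _ => hrow j]
    rw [Finset.sum_eq_single i]
    · rw [hself i]; field_simp
    · intro j _ hj; rw [hdot j i hj, mul_zero]
    · intro h; exact absurd (Finset.mem_univ i) h
  obtain ⟨b, hbsub, hbspan, hbind⟩ := exists_linearIndependent ℚ (Set.range col)
  have hbfin : b.Finite := (Set.finite_range col).subset hbsub
  haveI : Fintype b := hbfin.fintype
  have hbasis : Module.Basis b ℚ (Fin m → ℚ) :=
    Module.Basis.mk hbind (le_of_eq (by rw [Subtype.range_coe, hbspan, hspan]))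
  have hcardb : Fintype.card b = m := by
    have h := Module.finrank_eq_card_basis hbasis
    rw [Module.finrank_fin_fun] at h
    exact h.symm
  have choice : ∀ v : b, ∃ s : Fin t, col s = (v : Fin m → ℚ) := fun v => hbsub v.2
  choose g hg using choice
  have hginj : Function.Injective g := by
    intro v w hvw
    apply Subtype.ext
    rw [← hg v, ← hg w, hvw]
  set T : Finset (Fin t) := Finset.univ.image g with hT
  have hTcard : T.card = m := by
    rw [hT, Finset.card_image_of_injective _ hginj, Finset.card_univ, hcardb]
  set X := {x : Fin t → ℤ // (∀ s, x s = 1 ∨ x s = -1) ∧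
      ∀ i : Fin m, ∑ s : Fin t, R i s * x s = 0} with hX
  have hinj : Function.Injective
      (fun x : X => (fun s : {s : Fin t // s ∉ T} => decide (x.1 s.1 = 1))) := by
    intro x y hxy
    have hout : ∀ s, s ∉ T → x.1 s = y.1 s := by
      intro s hs
      have hb := congrFun hxy ⟨s, hs⟩
      rcases x.2.1 s with hx | hx <;> rcases y.2.1 s with hy | hy <;>
        rw [hx, hy] <;> simp [hx, hy] at hb ⊢
    set z : Fin t → ℚ := fun s => (x.1 s : ℚ) - (y.1 s : ℚ) with hz
    have hzout : ∀ s, s ∉ T → z s = 0 := by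
      intro s hs; rw [hz]; simp [hout s hs]
    have hveczero : ∑ s : Fin t, z s • col s = 0 := by
      funext i
      rw [Finset.sum_apply]
      have : ∀ s : Fin t, (z s • col s) i = (R i s : ℚ) * (x.1 s : ℚ) - (R i s : ℚ) * (y.1 s : ℚ) := by
        intro s; rw [Pi.smul_apply, smul_eq_mul, hcol, hz]; ring
      rw [Finset.sum_congr rfl fun s _ => this s, Finset.sum_sub_distrib]
      have hx0 : ∑ s : Fin t, (R i s : ℚ) * (x.1 s : ℚ) = 0 := by
        have := x.2.2 i; exact_mod_cast congrArg (fun w : ℤ => (w : ℚ)) this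
      have hy0 : ∑ s : Fin t, (R i s : ℚ) * (y.1 s : ℚ) = 0 := by
        have := y.2.2 i; exact_mod_cast congrArg (fun w : ℤ => (w : ℚ)) this
      rw [hx0, hy0, sub_zero]
      rfl
    have hTsum : ∑ v : b, z (g v) • (v : Fin m → ℚ) = 0 := by
      have h1 : ∑ s ∈ T, z s • col s = ∑ s : Fin t, z s • col s := by
        apply Finset.sum_subset (Finset.subset_univ T)
        intro s _ hs
        rw [hzout s hs, zero_smul]
      have h2 : ∑ s ∈ T, z s • col s = ∑ v : b, z (g v) • col (g v) := by
        rw [hT, Finset.sum_image (fun v _ w _ h => hginj h)]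
      have h3 : ∀ v : b, z (g v) • col (g v) = z (g v) • (v : Fin m → ℚ) := by
        intro v; rw [hg v]
      rw [← Finset.sum_congr rfl fun v _ => h3 v, ← h2, h1, hveczero]
    have hcoef : ∀ v : b, z (g v) = 0 :=
      Fintype.linearIndependent_iff.mp hbind (fun v => z (g v)) hTsum
    have hzall : ∀ s, z s = 0 := by
      intro s
      by_cases hs : s ∈ T
      · rw [hT] at hs
        obtain ⟨v, -, rfl⟩ := Finset.mem_image.mp hs
        exact hcoef v
      · exact hzout s hs
    apply Subtype.ext; funext s
    have h' : (x.1 s : ℚ) - (y.1 s : ℚ) = 0 := hzall s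
    have h'' : (x.1 s : ℚ) = (y.1 s : ℚ) := by linarith
    exact_mod_cast h''
  calc Nat.card X ≤ Nat.card ({s : Fin t // s ∉ T} → Bool) :=
        Nat.card_le_card_of_injective _ hinj
    _ = 2 ^ (t - m) := by
        have hc : Fintype.card {s : Fin t // s ∉ T} = t - m := by
          rw [Fintype.card_subtype_compl, Fintype.card_fin]
          simp only [Fintype.card_coe]
          rw [hTcard]
        rw [Nat.card_eq_fintype_card, Fintype.card_fun, hc, Fintype.card_bool]
  -- done

lemma numPH_succ_le (m t : ℕ) (ht : 0 < t) :
    numPH (m + 1) t ≤ 2 ^ (t - m) * numPH m t := by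
  classical
  haveI : Finite {Y : Fin (m+1) → Fin t → ℤ // IsPartialHadamard (m+1) t Y} := finitePH _ _
  haveI : Finite {Z : Fin m → Fin t → ℤ // IsPartialHadamard m t Z} := finitePH _ _
  haveI : Fintype {Z : Fin m → Fin t → ℤ // IsPartialHadamard m t Z} := Fintype.ofFinite _
  set H := {Y : Fin (m+1) → Fin t → ℤ // IsPartialHadamard (m+1) t Y} with hH
  have hres : ∀ Y : H, IsPartialHadamard m t (fun i s => Y.1 i.castSucc s) := by
    intro Y
    refine ⟨fun i s => Y.2.1 _ _, fun i j hij => Y.2.2 _ _ ?_⟩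
    simpa [Fin.castSucc_inj] using hij
  let f : H → {Z : Fin m → Fin t → ℤ // IsPartialHadamard m t Z} := fun Y => ⟨_, hres Y⟩
  haveI : ∀ Z, Fintype {Y : H // f Y = Z} := fun Z => Fintype.ofFinite _
  have fiber_bound : ∀ Z : {Z : Fin m → Fin t → ℤ // IsPartialHadamard m t Z},
      Nat.card {Y : H // f Y = Z} ≤ 2 ^ (t - m) := by
    intro Z
    haveI := finite_pm (fun x : Fin t → ℤ => ∀ i : Fin m, ∑ s : Fin t, Z.1 i s * x s = 0)
    have hmap : ∀ W : {Y : H // f Y = Z}, (∀ s, W.1.1 (Fin.last m) s = 1 ∨ W.1.1 (Fin.last m) s = -1) ∧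
        ∀ i : Fin m, ∑ s : Fin t, Z.1 i s * W.1.1 (Fin.last m) s = 0 := by
      intro W
      constructor
      · exact fun s => W.1.2.1 _ _
      · intro i
        have hz : Z.1 i = fun s => W.1.1 i.castSucc s := by
          rw [← congrArg Subtype.val W.2]
        rw [hz]
        exact W.1.2.2 i.castSucc (Fin.last m) (Fin.castSucc_lt_last i).ne
    have hinj : Function.Injective (fun W : {Y : H // f Y = Z} =>
        (⟨W.1.1 (Fin.last m), hmap W⟩ : {x : Fin t → ℤ // (∀ s, x s = 1 ∨ x s = -1) ∧
          ∀ i : Fin m, ∑ s : Fin t, Z.1 i s * x s = 0})) := by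
      intro W W' h
      have hlast : W.1.1 (Fin.last m) = W'.1.1 (Fin.last m) := congrArg Subtype.val h
      apply Subtype.ext; apply Subtype.ext; funext i s
      induction i using Fin.lastCases with
      | last => rw [congrFun hlast s]
      | cast i =>
        have h1 : (fun i s => W.1.1 i.castSucc s) = Z.1 := congrArg Subtype.val W.2
        have h2 : (fun i s => W'.1.1 i.castSucc s) = Z.1 := congrArg Subtype.val W'.2
        have e1 : W.1.1 i.castSucc s = Z.1 i s := congrFun (congrFun h1 i) s
        have e2 : W'.1.1 i.castSucc s = Z.1 i s := congrFun (congrFun h2 i) s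
        rw [e1, e2]
    exact le_trans (Nat.card_le_card_of_injective _ hinj)
      (extension_card_le ht Z.1 Z.2.1 Z.2.2)
  calc numPH (m+1) t = Nat.card ((Z : {Z : Fin m → Fin t → ℤ // IsPartialHadamard m t Z}) × {Y : H // f Y = Z}) :=
        Nat.card_congr (Equiv.sigmaFiberEquiv f).symm
    _ = ∑ Z : {Z : Fin m → Fin t → ℤ // IsPartialHadamard m t Z}, Nat.card {Y : H // f Y = Z} := by
        rw [Nat.card_eq_fintype_card, Fintype.card_sigma]
        exact Finset.sum_congr rfl fun Z _ => (Nat.card_eq_fintype_card).symm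
    _ ≤ ∑ _Z : {Z : Fin m → Fin t → ℤ // IsPartialHadamard m t Z}, 2 ^ (t - m) :=
        Finset.sum_le_sum fun Z _ => fiber_bound Z
    _ = 2 ^ (t - m) * numPH m t := by
        rw [Finset.sum_const, Finset.card_univ, smul_eq_mul, numPH, Nat.card_eq_fintype_card,
          mul_comm]

lemma numPH_zero (t : ℕ) : numPH 0 t = 1 := by
  rw [numPH]
  haveI : Unique {Y : Fin 0 → Fin t → ℤ // IsPartialHadamard 0 t Y} := by
    refine ⟨⟨⟨fun i => i.elim0, fun i => i.elim0, fun i => i.elim0⟩⟩, ?_⟩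
    intro Y
    apply Subtype.ext; funext i; exact i.elim0
  exact Nat.card_unique

lemma chain (t : ℕ) (ht : 0 < t) : ∀ k, numPH k t ≤ 2 ^ (∑ j ∈ Finset.range k, (t - j)) := by
  intro k
  induction k with
  | zero => simp [numPH_zero]
  | succ k ih =>
    calc numPH (k+1) t ≤ 2 ^ (t - k) * numPH k t := numPH_succ_le k t ht
      _ ≤ 2 ^ (t - k) * 2 ^ (∑ j ∈ Finset.range k, (t - j)) := Nat.mul_le_mul_left _ ih
      _ = 2 ^ (∑ j ∈ Finset.range (k+1), (t - j)) := by
          rw [← pow_add, Finset.sum_range_succ, add_comm]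

lemma exp_eq (n : ℕ) : ∑ j ∈ Finset.range n, (n - j) = (n+1).choose 2 := by
  have h1 : ∑ j ∈ Finset.range n, (n - j) = ∑ j ∈ Finset.range n, (j + 1) := by
    rw [← Finset.sum_range_reflect (fun j => n - j) n]
    exact Finset.sum_congr rfl fun j hj => by
      have := Finset.mem_range.mp hj; omega
  have h2 : ∑ j ∈ Finset.range (n+1), j = ∑ j ∈ Finset.range n, (j+1) := by
    rw [Finset.sum_range_succ' (fun i => i) n]
    simp
  rw [h1, ← h2, Finset.sum_range_id, Nat.choose_two_right]

end Aux

theorem stmt17 (n t : ℕ) (hn : 2 ≤ n) (ht : n ≤ t) :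
    numPH n t ≤ 2 ^ (t - n + 1) * numPH (n - 1) t ∧
    numPH n n ≤ 2 ^ ((n + 1).choose 2) := by
  obtain ⟨m, rfl⟩ : ∃ m, n = m + 1 := ⟨n - 1, by omega⟩
  constructor
  · have h1 : t - (m + 1) + 1 = t - m := by omega
    have h2 : m + 1 - 1 = m := by omega
    rw [h1, h2]
    exact numPH_succ_le m t (by omega)
  · have h := chain (m+1) (by omega) (m+1)
    rwa [exp_eq] at h
end
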